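/- arXiv:1610.04022 — 11 statements merged into one kernel-verified Lean document; each statement's English description precedes it below -/
import Mathlib

section
/- Let p(x) be a polynomial with non-negative integer coefficients such that p(0) = 1 and deg p ≥ 2. Then for all positive integers a and b, p(a) + p(b) ≤ p(a + b). -/
theorem stmt_0 (p : Polynomial ℕ) (h0 : p.coeff 0 = 1) (hdeg : 2 ≤ p.natDegree)
    (a b : ℕ) (ha : 0 < a) (hb : 0 < b) :
    p.eval a + p.eval b ≤ p.eval (a + b) := by
  obtain ⟨k, hk⟩ : ∃ k, p.natDegree = k + 2 := ⟨p.natDegree - 2, by omega⟩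
  have heval : ∀ x : ℕ, p.eval x =
      (∑ i ∈ Finset.range (k+1), p.coeff (i+1) * x^(i+1))
        + p.coeff (k+2) * x^(k+2) + 1 := by
    intro x
    rw [Polynomial.eval_eq_sum_range, hk]
    rw [show k + 2 + 1 = (k + 2) + 1 from rfl, Finset.sum_range_succ',
      Finset.sum_range_succ, h0]
    ring
  have hp0 : p ≠ 0 := fun h => by simp [h] at h0
  have hc : 1 ≤ p.coeff (k+2) := by
    have := Polynomial.leadingCoeff_ne_zero.mpr hp0
    rw [Polynomial.leadingCoeff, hk] at this
    omega
  have hsum : (∑ i ∈ Finset.range (k+1), p.coeff (i+1) * a^(i+1))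
      + (∑ i ∈ Finset.range (k+1), p.coeff (i+1) * b^(i+1))
      ≤ ∑ i ∈ Finset.range (k+1), p.coeff (i+1) * (a+b)^(i+1) := by
    rw [← Finset.sum_add_distrib]
    apply Finset.sum_le_sum
    intro i _
    rw [← Nat.mul_add]
    exact Nat.mul_le_mul_left _ (pow_add_pow_le (Nat.zero_le a) (Nat.zero_le b) (Nat.succ_ne_zero i))
  have h1 : 1 ≤ a^(k+1) * b := Nat.one_le_iff_ne_zero.mpr (by positivity)
  have htop : a^(k+2) + b^(k+2) + 1 ≤ (a+b)^(k+2) := by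
    calc a^(k+2) + b^(k+2) + 1 ≤ (a^(k+1) + b^(k+1)) * (a + b) := by
          have : (a^(k+1) + b^(k+1)) * (a + b)
              = a^(k+2) + b^(k+2) + a^(k+1)*b + b^(k+1)*a := by ring
          rw [this]
          have h2 : 0 < b^(k+1)*a := by positivity
          omega
      _ ≤ (a+b)^(k+1) * (a+b) := Nat.mul_le_mul_right _
          (pow_add_pow_le (Nat.zero_le a) (Nat.zero_le b) (Nat.succ_ne_zero k))
      _ = (a+b)^(k+2) := by ring
  rw [heval a, heval b, heval (a+b)]
  have hctop : p.coeff (k+2) * a^(k+2) + p.coeff (k+2) * b^(k+2) + 1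
      ≤ p.coeff (k+2) * (a+b)^(k+2) := by
    calc p.coeff (k+2) * a^(k+2) + p.coeff (k+2) * b^(k+2) + 1
        ≤ p.coeff (k+2) * (a^(k+2) + b^(k+2) + 1) := by
          rw [Nat.mul_add, Nat.mul_add, Nat.mul_one]
          have := Nat.mul_le_mul_left (a^(k+2) + b^(k+2)) hc
          omega
      _ ≤ p.coeff (k+2) * (a+b)^(k+2) := Nat.mul_le_mul_left _ htop
  omega
end

section
/- Let p(x) be a polynomial with non-negative integer coefficients such that p(0) = 1 and deg p ≥ 2. Then for every n ≥ 1 and every tuple (a_1, ..., a_n) of positive integers with a_1 + ... + a_n = S, we have p(a_1) + ... + p(a_n) ≤ p(S). -/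
lemma powB {a b d : ℕ} (ha : 1 ≤ a) (hb : 1 ≤ b) (hd : 2 ≤ d) :
    a ^ d + b ^ d + 2 ≤ (a + b) ^ d := by
  obtain ⟨e, rfl⟩ : ∃ e, d = e + 2 := ⟨d - 2, by omega⟩
  have h1 : a ^ e ≤ (a + b) ^ e := Nat.pow_le_pow_left (by omega) e
  have h2 : b ^ e ≤ (a + b) ^ e := Nat.pow_le_pow_left (by omega) e
  have h3 : 1 ≤ (a + b) ^ e := Nat.one_le_pow _ _ (by omega)
  have h4 : 1 ≤ a * b := Nat.one_le_iff_ne_zero.mpr (by positivity)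
  have : (a + b) ^ (e + 2) = (a + b) ^ e * (a * a) + (a + b) ^ e * (b * b)
      + (a + b) ^ e * (2 * (a * b)) := by ring
  rw [this, pow_succ, pow_succ, pow_succ, pow_succ]
  have := Nat.mul_le_mul h1 (le_refl (a * a))
  nlinarith [Nat.mul_le_mul h1 (le_refl (a * a)), Nat.mul_le_mul h2 (le_refl (b * b)),
    Nat.mul_le_mul h3 (le_refl (2 * (a * b)))]

lemma key (p : Polynomial ℕ) (h0 : p.coeff 0 = 1) (hdeg : 2 ≤ p.natDegree)
    {a b : ℕ} (ha : 1 ≤ a) (hb : 1 ≤ b) :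
    p.eval a + p.eval b ≤ p.eval (a + b) := by
  set d := p.natDegree with hd
  have hp0 : p ≠ 0 := fun h => by simp [h] at h0
  have hcd : 1 ≤ p.coeff d := Nat.one_le_iff_ne_zero.mpr
    (Polynomial.leadingCoeff_ne_zero.mpr hp0)
  have hsplit : ∀ x : ℕ, p.eval x =
      p.coeff 0 * x ^ 0 + ∑ k ∈ Finset.Ico 1 d, p.coeff k * x ^ k + p.coeff d * x ^ d := by
    intro x
    rw [Polynomial.eval_eq_sum_range, ← hd, Finset.range_eq_Ico,
      Finset.sum_eq_sum_Ico_succ_bot (by omega),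
      Finset.sum_Ico_succ_top (by omega)]
    ring
  rw [hsplit a, hsplit b, hsplit (a + b), h0]
  have hsum : ∑ k ∈ Finset.Ico 1 d, p.coeff k * a ^ k
      + ∑ k ∈ Finset.Ico 1 d, p.coeff k * b ^ k
      ≤ ∑ k ∈ Finset.Ico 1 d, p.coeff k * (a + b) ^ k := by
    rw [← Finset.sum_add_distrib]
    refine Finset.sum_le_sum fun k hk => ?_
    have hk1 : k ≠ 0 := by simp [Finset.mem_Ico] at hk; omega
    rw [← Nat.mul_add]
    exact Nat.mul_le_mul_left _ (pow_add_pow_le (by omega) (by omega) hk1)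
  have htop : p.coeff d * a ^ d + p.coeff d * b ^ d + 2 ≤ p.coeff d * (a + b) ^ d := by
    calc p.coeff d * a ^ d + p.coeff d * b ^ d + 2
        ≤ p.coeff d * a ^ d + p.coeff d * b ^ d + p.coeff d * 2 := by nlinarith
      _ = p.coeff d * (a ^ d + b ^ d + 2) := by ring
      _ ≤ p.coeff d * (a + b) ^ d := Nat.mul_le_mul_left _ (powB ha hb hdeg)
  simp only [pow_zero, mul_one, one_mul] at *
  omega

theorem stmt_1 (p : Polynomial ℕ) (h0 : p.coeff 0 = 1) (hdeg : 2 ≤ p.natDegree)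
    (n : ℕ) (hn : 1 ≤ n) (a : Fin n → ℕ) (ha : ∀ i, 0 < a i) (S : ℕ)
    (hS : ∑ i, a i = S) :
    ∑ i, p.eval (a i) ≤ p.eval S := by
  subst hS
  revert hn a
  induction n with
  | zero => omega
  | succ m ih =>
    intro hn a ha
    rcases Nat.eq_zero_or_pos m with rfl | hm
    · simp
    · have htail : 0 < ∑ i : Fin m, a i.succ :=
        Finset.sum_pos (fun i _ => ha i.succ) ⟨⟨0, hm⟩, Finset.mem_univ _⟩
      have h1 : ∑ i : Fin m, p.eval (a i.succ) ≤ p.eval (∑ i : Fin m, a i.succ) :=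
        ih hm (fun i => a i.succ) (fun i => ha i.succ)
      calc ∑ i, p.eval (a i) = p.eval (a 0) + ∑ i : Fin m, p.eval (a i.succ) := by
            rw [Fin.sum_univ_succ]
        _ ≤ p.eval (a 0) + p.eval (∑ i : Fin m, a i.succ) := by omega
        _ ≤ p.eval (a 0 + ∑ i : Fin m, a i.succ) := key p h0 hdeg (ha 0) htail
        _ = p.eval (∑ i, a i) := by rw [Fin.sum_univ_succ]
end

section
/- Let k be a field of characteristic 0 with algebraic closure k̄, A a k-algebra, and I an ideal of A. Then the extension of the radical of I to k̄ ⊗_k A equals the radical of the extension of I to k̄ ⊗_k A, i.e., k̄ ⊗_k √I = √(k̄ ⊗_k I). -/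
set_option synthInstance.maxHeartbeats 1000000
set_option maxHeartbeats 1000000
open Polynomial TensorProduct


/-- If `B` is a reduced algebra over a field `k` and `f` is a monic separable polynomial over
`k`, then the span of the image of `f` in `B[X]` is a radical ideal. -/
lemma span_map_separable_radical {k : Type*} [Field k] {B : Type*} [CommRing B] [IsReduced B]
    [Algebra k B] {f : k[X]} (hmon : f.Monic) (hsep : f.Separable)
    {g : B[X]} {n : ℕ} (hn : n ≠ 0)
    (hg : g ^ n ∈ Ideal.span {f.map (algebraMap k B)}) :
    g ∈ Ideal.span {f.map (algebraMap k B)} := by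
  set fB : B[X] := f.map (algebraMap k B) with hfB
  have hmonB : fB.Monic := hmon.map _
  rw [Ideal.mem_span_singleton] at hg ⊢
  rw [← modByMonic_eq_zero_iff_dvd hmonB]
  set r : B[X] := g %ₘ fB with hr
  -- show each coefficient of r is zero, being in every prime ideal
  have key : ∀ i, ∀ (p : Ideal B), p.IsPrime → r.coeff i ∈ p := by
    intro i p hp
    let F := FractionRing (B ⧸ p)
    let φ : B →+* F := (algebraMap (B ⧸ p) F).comp (Ideal.Quotient.mk p)
    have hφker : ∀ b : B, φ b = 0 → b ∈ p := by
      intro b hb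
      have : (algebraMap (B ⧸ p) F) (Ideal.Quotient.mk p b) = 0 := hb
      rw [← map_zero (algebraMap (B ⧸ p) F)] at this
      have := IsFractionRing.injective (B ⧸ p) F this
      rwa [Ideal.Quotient.eq_zero_iff_mem] at this
    have hmapf : fB.map φ = f.map (φ.comp (algebraMap k B)) := by
      rw [hfB, Polynomial.map_map]
    have hsepF : (fB.map φ).Separable := by
      rw [hmapf]; exact hsep.map
    have hsqf : Squarefree (fB.map φ) := hsepF.squarefree
    have hdvd : fB.map φ ∣ (g.map φ) := by
      rw [← hsqf.dvd_pow_iff_dvd hn, ← Polynomial.map_pow]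
      exact Polynomial.map_dvd φ hg
    have hrmap : r.map φ = 0 := by
      rw [hr, Polynomial.map_modByMonic _ hmonB, modByMonic_eq_zero_iff_dvd (hmonB.map φ)]
      exact hdvd
    apply hφker
    have := congrArg (fun q => Polynomial.coeff q i) hrmap
    simpa [Polynomial.coeff_map] using this
  have hr0 : r = 0 := by
    ext i
    have : r.coeff i ∈ nilradical B := by
      rw [nilradical_eq_sInf, Ideal.mem_sInf]
      intro J hJ
      exact key i J hJ
    rw [nilradical_eq_zero] at this
    simpa using this
  exact hr0

lemma isReduced_quot_span_map {k : Type*} [Field k] {B : Type*} [CommRing B] [IsReduced B]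
    [Algebra k B] {f : k[X]} (hmon : f.Monic) (hsep : f.Separable) :
    IsReduced (B[X] ⧸ Ideal.span {f.map (algebraMap k B)}) := by
  constructor
  rintro x ⟨n, hn⟩
  obtain ⟨g, rfl⟩ := Ideal.Quotient.mk_surjective x
  rcases eq_or_ne n 0 with rfl | hn0
  · rw [pow_zero] at hn
    rw [← mul_one (Ideal.Quotient.mk _ g), hn, mul_zero]
  · rw [← map_pow, Ideal.Quotient.eq_zero_iff_mem] at hn
    rw [Ideal.Quotient.eq_zero_iff_mem]
    exact span_map_separable_radical hmon hsep hn0 hn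

lemma polyEquivTensor_symm_one_tmul {k : Type*} [Field k] {B : Type*} [CommRing B]
    [Algebra k B] (f : k[X]) :
    (polyEquivTensor k B).symm ((1 : B) ⊗ₜ[k] f) = f.map (algebraMap k B) := by
  induction f using Polynomial.induction_on' with
  | add p q hp hq =>
    rw [TensorProduct.tmul_add, map_add, hp, hq, Polynomial.map_add]
  | monomial n a =>
    rw [polyEquivTensor_symm_apply_tmul, Polynomial.map_monomial]
    rw [Polynomial.sum_monomial_index a _ (by simp)]
    rw [one_mul]

lemma isReduced_tensor_of_fd (k : Type*) [Field k] [CharZero k] (L : Type*) [Field L]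
    [Algebra k L] [FiniteDimensional k L] (B : Type*) [CommRing B] [Algebra k B]
    [IsReduced B] : IsReduced (L ⊗[k] B) := by
  obtain ⟨α, hα⟩ := Field.exists_primitive_element k L
  have hint : IsIntegral k α := IsIntegral.of_finite k α
  set f := minpoly k α with hf
  have hmon : f.Monic := minpoly.monic hint
  have hsep : f.Separable := Algebra.IsSeparable.isSeparable k α
  -- the algebra equivalence L ⊗ B ≃ B ⊗ AdjoinRoot f
  let e1 : AdjoinRoot f ≃ₐ[k] L :=
    (IntermediateField.adjoinRootEquivAdjoin k hint).trans
      ((IntermediateField.equivOfEq hα).trans IntermediateField.topEquiv)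
  -- the surjection χ : B[X] → B ⊗ AdjoinRoot f
  let mkα : k[X] →ₐ[k] AdjoinRoot f :=
    ⟨AdjoinRoot.mk f, fun r => rfl⟩
  have hmksurj : Function.Surjective mkα := Ideal.Quotient.mk_surjective
  haveI : IsReduced (B[X] ⧸ Ideal.span {f.map (algebraMap k B)}) :=
    isReduced_quot_span_map hmon hsep
  let χ : B[X] →ₐ[k] B ⊗[k] AdjoinRoot f :=
    (Algebra.TensorProduct.map (AlgHom.id k B) mkα).comp (polyEquivTensor k B).toAlgHom
  have hχsurj : Function.Surjective χ := by
    have h1 : Function.Surjective (Algebra.TensorProduct.map (AlgHom.id k B) mkα) :=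
      TensorProduct.map_surjective Function.surjective_id hmksurj
    exact h1.comp (polyEquivTensor k B).surjective
  have hmkker : RingHom.ker mkα = Ideal.span {f} := Ideal.mk_ker
  have hχker : RingHom.ker χ = Ideal.span {f.map (algebraMap k B)} := by
    have h2 : RingHom.ker (Algebra.TensorProduct.map (AlgHom.id k B) mkα) =
        (Ideal.span {f}).map
          (Algebra.TensorProduct.includeRight : k[X] →ₐ[k] B ⊗[k] k[X]) := by
      rw [← hmkker]
      exact Algebra.TensorProduct.lTensor_ker mkα hmksurj
    have h3 : RingHom.ker χ =
        Ideal.comap (polyEquivTensor k B)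
          (RingHom.ker (Algebra.TensorProduct.map (AlgHom.id k B) mkα)) :=
      (AlgHom.comap_ker _ _).symm
    ext x
    rw [h3, h2, Ideal.map_span, Set.image_singleton, Ideal.mem_comap,
      Ideal.mem_span_singleton, Ideal.mem_span_singleton, ← polyEquivTensor_symm_one_tmul]
    constructor
    · intro h
      have h' := map_dvd (polyEquivTensor k B).symm h
      rwa [Algebra.TensorProduct.includeRight_apply, AlgEquiv.symm_apply_apply] at h'
    · intro h
      have h' := map_dvd (polyEquivTensor k B) h
      rw [AlgEquiv.apply_symm_apply] at h'
      simpa only [Algebra.TensorProduct.includeRight_apply] using h'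
  haveI : IsReduced (B ⊗[k] AdjoinRoot f) := by
    have e3 : (B[X] ⧸ Ideal.span {f.map (algebraMap k B)}) ≃+* B ⊗[k] AdjoinRoot f := by
      rw [← hχker]
      exact RingHom.quotientKerEquivOfSurjective hχsurj
    exact isReduced_of_injective e3.symm.toRingHom e3.symm.injective
  have e2 : L ⊗[k] B ≃ₐ[k] B ⊗[k] AdjoinRoot f :=
    (Algebra.TensorProduct.comm k L B).trans
      (Algebra.TensorProduct.congr (AlgEquiv.refl) e1.symm)
  exact isReduced_of_injective e2.toRingEquiv.toRingHom e2.injective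

lemma isReduced_tensor_algClosure (k : Type*) [Field k] [CharZero k] (B : Type*) [CommRing B]
    [Algebra k B] [IsReduced B] : IsReduced (TensorProduct k (AlgebraicClosure k) B) := by
  constructor
  classical
  rintro x ⟨n, hn⟩
  obtain ⟨S, rfl⟩ := TensorProduct.exists_finset x
  set L := IntermediateField.adjoin k ((S.image Prod.fst : Finset (AlgebraicClosure k)) :
    Set (AlgebraicClosure k)) with hL
  haveI : FiniteDimensional k L := by
    apply IntermediateField.finiteDimensional_adjoin
    intro x _
    exact Algebra.IsIntegral.isIntegral x
  let ψ : L ⊗[k] B →ₐ[k] (AlgebraicClosure k) ⊗[k] B :=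
    Algebra.TensorProduct.map (L.val) (AlgHom.id k B)
  have hψinj : Function.Injective ψ := by
    have : Function.Injective (LinearMap.rTensor B (L.val.toLinearMap)) :=
      Module.Flat.rTensor_preserves_injective_linearMap _ (L.val.injective)
    exact this
  have hmem : ∀ i ∈ S, ∃ y : L ⊗[k] B, ψ y = i.1 ⊗ₜ[k] i.2 := by
    intro i hi
    have h1 : i.1 ∈ L := by
      apply IntermediateField.subset_adjoin
      simp only [Finset.coe_image, Set.mem_image, Finset.mem_coe]
      exact ⟨i, hi, rfl⟩
    exact ⟨(⟨i.1, h1⟩ : L) ⊗ₜ[k] i.2, rfl⟩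
  choose y hy using hmem
  have hx : (∑ i ∈ S, i.1 ⊗ₜ[k] i.2) = ψ (∑ i ∈ S.attach, y i.1 i.2) := by
    rw [map_sum, ← Finset.sum_attach S (fun i => i.1 ⊗ₜ[k] i.2)]
    exact Finset.sum_congr rfl fun i _ => (hy i.1 i.2).symm
  rw [hx] at hn ⊢
  haveI : IsReduced (L ⊗[k] B) := isReduced_tensor_of_fd k L B
  replace hn : ψ ((∑ i ∈ S.attach, y i.1 i.2) ^ n) = 0 := (map_pow ψ.toRingHom _ n).trans hn
  have h0 : (∑ i ∈ S.attach, y i.1 i.2) ^ n = 0 := by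
    apply hψinj
    rw [hn, map_zero]
  rw [IsNilpotent.eq_zero ⟨n, h0⟩, map_zero]

theorem stmt_3 (k : Type*) [Field k] [CharZero k] {A : Type*} [CommRing A] [Algebra k A]
    (I : Ideal A) :
    I.radical.map
        (Algebra.TensorProduct.includeRight :
          A →ₐ[k] TensorProduct k (AlgebraicClosure k) A).toRingHom =
      (I.map (Algebra.TensorProduct.includeRight :
          A →ₐ[k] TensorProduct k (AlgebraicClosure k) A).toRingHom).radical := by
  apply le_antisymm
  · exact Ideal.map_radical_le
      (f := (Algebra.TensorProduct.includeRight :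
        A →ₐ[k] TensorProduct k (AlgebraicClosure k) A).toRingHom)
  · set J := I.radical with hJ
    letI B := A ⧸ J
    haveI : IsReduced B := (Ideal.isRadical_iff_quotient_reduced J).mp (Ideal.radical_isRadical I)
    haveI : IsReduced (TensorProduct k (AlgebraicClosure k) B) :=
      isReduced_tensor_algClosure k B
    let g : A →ₐ[k] B := Ideal.Quotient.mkₐ k J
    let φ : TensorProduct k (AlgebraicClosure k) A →ₐ[k] TensorProduct k (AlgebraicClosure k) B :=
      Algebra.TensorProduct.map (AlgHom.id k (AlgebraicClosure k)) g
    have hgker : RingHom.ker g = J := Ideal.mk_ker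
    have hker : RingHom.ker φ = J.map
        (Algebra.TensorProduct.includeRight :
          A →ₐ[k] TensorProduct k (AlgebraicClosure k) A) := by
      have h := Algebra.TensorProduct.lTensor_ker (A := AlgebraicClosure k) g (Ideal.Quotient.mkₐ_surjective k J)
      rw [hgker] at h
      exact h
    intro x hx
    obtain ⟨n, hn⟩ := hx
    have hxn : x ^ n ∈ RingHom.ker φ := by
      rw [hker]
      exact Ideal.map_mono Ideal.le_radical hn
    have hφx : φ x = 0 := by
      apply IsNilpotent.eq_zero (x := φ x)
      exact ⟨n, by rw [← map_pow]; exact hxn⟩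
    have : x ∈ RingHom.ker φ := hφx
    rw [hker] at this
    exact this
end

section
/- Let k be a field of characteristic 0 with algebraic closure k̄, A a k-algebra, and I an ideal of A with Noether exponent μ (the smallest positive integer with (√I)^μ ⊆ I). Then the Noether exponent of the extended ideal k̄ ⊗_k I in k̄ ⊗_k A is at most μ. -/
open scoped TensorProduct

universe u v

/-- A copy of `ULift` carrying no instances. -/
def Copy (K : Type u) : Type (max u v) := ULift.{v} K

noncomputable instance (K : Type u) [Field K] : Field (Copy.{u, v} K) := ULift.field

def copyRingEquiv (K : Type u) [Field K] : Copy.{u, v} K ≃+* K := ULift.ringEquiv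

set_option synthInstance.maxHeartbeats 400000 in
set_option maxHeartbeats 1600000 in
theorem myIsReduced (K : Type u) (A : Type v) [Field K] [CommRing A] [Algebra K A]
    [Algebra.FormallyUnramified K A] [Module.Finite K A] : IsReduced A := by
  let K' : Type (max u v) := Copy.{u, v} K
  letI alg1 : Algebra K' A := ((algebraMap K A).comp ((copyRingEquiv K).toRingHom)).toAlgebra
  letI alg2 : Algebra K' K := ((copyRingEquiv K).toRingHom : K' →+* K).toAlgebra
  haveI : IsScalarTower K' K A := IsScalarTower.of_algebraMap_eq' rfl
  let e0 : K' ≃ₐ[K'] K := AlgEquiv.ofRingEquiv (f := copyRingEquiv K) (fun x => rfl)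
  haveI : Algebra.FormallyUnramified K' K := Algebra.FormallyUnramified.of_equiv e0
  haveI : Algebra.FormallyUnramified K' A := Algebra.FormallyUnramified.comp K' K A
  haveI : Module.Finite K' K := Module.Finite.equiv e0.toLinearEquiv
  haveI : Module.Finite K' A := Module.Finite.trans K A
  haveI : Algebra.FiniteType K' A := inferInstance
  -- now lift A
  let A' : Type (max u v) := ULift.{u} A
  let eA : A' ≃ₐ[K'] A := AlgEquiv.ofRingEquiv (f := (ULift.ringEquiv : A' ≃+* A))
    (fun x => ULift.down_algebraMap.{max u v, v, u} x)
  haveI : Algebra.FormallyUnramified K' A' := Algebra.FormallyUnramified.of_equiv eA.symm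
  haveI : Algebra.FiniteType K' A' := Algebra.FiniteType.equiv inferInstance eA.symm
  haveI : Algebra.EssFiniteType K' A' := inferInstance
  haveI : IsReduced A' := Algebra.FormallyUnramified.isReduced_of_field K' A'
  exact isReduced_of_injective eA.toRingEquiv.symm.toRingHom eA.toRingEquiv.symm.injective

theorem exists_rep {k : Type u} [Field k] {L : Type*} [Field L] [Algebra k L]
    {B : Type v} [CommRing B] [Algebra k B] {ι : Type*} [Fintype ι]
    (e : Module.Basis ι k L) (y : L ⊗[k] B) : ∃ r : ι → B, y = ∑ i, e i ⊗ₜ[k] r i := by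
  induction y using TensorProduct.induction_on with
  | zero => exact ⟨0, by simp⟩
  | tmul c b =>
    refine ⟨fun i => e.repr c i • b, ?_⟩
    conv_lhs => rw [← e.sum_repr c]
    rw [TensorProduct.sum_tmul]
    exact Finset.sum_congr rfl fun i _ => (TensorProduct.smul_tmul _ _ _)
  | add u v hu hv =>
    obtain ⟨r, hr⟩ := hu
    obtain ⟨s, hs⟩ := hv
    exact ⟨r + s, by simp [hr, hs, TensorProduct.tmul_add, Finset.sum_add_distrib]⟩

theorem tensorFieldReduced (k : Type u) [Field k] [CharZero k] (L : Type u) [Field L]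
    [Algebra k L] [FiniteDimensional k L] (F : Type v) [Field F] [Algebra k F] :
    IsReduced (F ⊗[k] L) := by
  haveI : Algebra.FormallyUnramified k L := Algebra.FormallyUnramified.of_isSeparable k L
  haveI : Algebra.FormallyUnramified F (F ⊗[k] L) := inferInstance
  haveI : Module.Finite F (F ⊗[k] L) := inferInstance
  exact myIsReduced F (F ⊗[k] L)

theorem finiteTensorReduced (k : Type u) [Field k] [CharZero k] (L : Type u) [Field L]
    [Algebra k L] [FiniteDimensional k L] (B : Type v) [CommRing B] [Algebra k B]
    [IsReduced B] : IsReduced (L ⊗[k] B) := by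
  constructor
  intro y hy
  let e := Module.finBasis k L
  obtain ⟨r, hr⟩ := exists_rep e y
  suffices hri : ∀ i, r i = 0 by
    rw [hr]
    simp [hri]
  intro i
  have hnil : r i ∈ nilradical B := by
    rw [nilradical_eq_sInf]
    refine Ideal.mem_sInf.mpr ?_
    rintro p hp
    haveI : p.IsPrime := hp
    let κ := FractionRing (B ⧸ p)
    let π : B →ₐ[k] κ := (IsScalarTower.toAlgHom k (B ⧸ p) κ).comp (Ideal.Quotient.mkₐ k p)
    let θ : L ⊗[k] B →ₐ[k] κ ⊗[k] L :=
      ((Algebra.TensorProduct.comm k L κ).toAlgHom).comp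
        (Algebra.TensorProduct.map (AlgHom.id k L) π)
    have hθy : θ y = ∑ j, π (r j) ⊗ₜ[k] e j := by
      rw [hr, map_sum]
      refine Finset.sum_congr rfl fun j _ => ?_
      simp [θ, Algebra.TensorProduct.comm_tmul]
    haveI : IsReduced (κ ⊗[k] L) := tensorFieldReduced k L κ
    have h0 : θ y = 0 := by
      obtain ⟨n, hn⟩ := hy
      refine IsNilpotent.eq_zero ⟨n, ?_⟩
      rw [← map_pow, hn, map_zero]
    have hco := congrArg (fun z => ((e.baseChange κ).repr z) i) h0
    simp only [hθy, map_sum, Finsupp.coe_finset_sum, Finset.sum_apply,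
      Module.Basis.baseChange_repr_tmul, Module.Basis.repr_self, map_zero, Finsupp.coe_zero,
      Pi.zero_apply] at hco
    rw [Finset.sum_eq_single i] at hco
    · simp only [Finsupp.single_eq_same, one_smul] at hco
      have : (Ideal.Quotient.mk p) (r i) = 0 := by
        apply IsFractionRing.injective (B ⧸ p) κ
        rw [map_zero]
        exact hco
      exact (Ideal.Quotient.eq_zero_iff_mem).mp this
    · intro j _ hji
      simp [Finsupp.single_eq_of_ne' hji]
    · intro h
      exact absurd (Finset.mem_univ i) h
  rwa [nilradical_eq_zero, Ideal.zero_eq_bot, Ideal.mem_bot] at hnil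

set_option synthInstance.maxHeartbeats 400000 in
set_option maxHeartbeats 1600000 in
theorem closureTensorReduced (k : Type u) [Field k] [CharZero k] (B : Type v) [CommRing B]
    [Algebra k B] [IsReduced B] : IsReduced (AlgebraicClosure k ⊗[k] B) := by
  classical
  constructor
  intro x hx
  set K := AlgebraicClosure k
  obtain ⟨s, hs⟩ := TensorProduct.exists_finset x
  let S : Set K := ↑(s.image Prod.fst)
  haveI : Finite S := (s.image Prod.fst).finite_toSet.to_subtype
  let L : IntermediateField k K := IntermediateField.adjoin k S
  haveI : FiniteDimensional k L :=
    IntermediateField.finiteDimensional_adjoin fun c _ =>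
      (Algebra.IsAlgebraic.isAlgebraic (R := k) c).isIntegral
  let g : L ⊗[k] B →ₐ[k] K ⊗[k] B := Algebra.TensorProduct.map L.val (AlgHom.id k B)
  have hg : ∀ z, g z = LinearMap.rTensor B L.val.toLinearMap z := by
    intro z
    induction z using TensorProduct.induction_on with
    | zero => simp
    | tmul c b => rfl
    | add u v hu hv => simp [map_add, hu, hv]
  have hginj : Function.Injective g := by
    have h1 : Function.Injective (LinearMap.rTensor B L.val.toLinearMap) :=
      Module.Flat.rTensor_preserves_injective_linearMap _ fun a b h => Subtype.ext h
    intro a b h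
    exact h1 (by rw [← hg, ← hg, h])
  have hmem : ∀ p ∈ s, p.1 ∈ L := fun p hp =>
    IntermediateField.subset_adjoin k S (Finset.mem_coe.mpr (Finset.mem_image_of_mem Prod.fst hp))
  let y : L ⊗[k] B := ∑ p ∈ s.attach, (⟨p.1.1, hmem p.1 p.2⟩ : L) ⊗ₜ[k] p.1.2
  have hgy : g y = x := by
    rw [hs, map_sum]
    rw [← Finset.sum_attach s fun p => p.1 ⊗ₜ[k] p.2]
    exact Finset.sum_congr rfl fun p _ => rfl
  haveI : IsReduced (L ⊗[k] B) := finiteTensorReduced k L B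
  have hy : IsNilpotent y := by
    obtain ⟨n, hn⟩ := hx
    refine ⟨n, hginj ?_⟩
    rw [show g (y ^ n) = g y ^ n from g.toRingHom.map_pow y n, hgy, hn, map_zero]
  rw [← hgy, hy.eq_zero, map_zero]

theorem stmt_4 (k : Type*) [Field k] [CharZero k] {A : Type*} [CommRing A] [Algebra k A]
    (I : Ideal A) (μ : ℕ) (hμ : 0 < μ) (hNoether : I.radical ^ μ ≤ I) :
    (I.map (Algebra.TensorProduct.includeRight :
        A →ₐ[k] TensorProduct k (AlgebraicClosure k) A).toRingHom).radical ^ μ ≤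
      I.map (Algebra.TensorProduct.includeRight :
        A →ₐ[k] TensorProduct k (AlgebraicClosure k) A).toRingHom := by
  set K := AlgebraicClosure k
  let ff : A →ₐ[k] K ⊗[k] A := Algebra.TensorProduct.includeRight
  show (I.map ff.toRingHom).radical ^ μ ≤ I.map ff.toRingHom
  have hmapeq : ∀ (J : Ideal A), J.map ff.toRingHom = J.map ff := fun J => rfl
  let q : A →ₐ[k] A ⧸ I.radical := Ideal.Quotient.mkₐ k I.radical
  let φ : K ⊗[k] A →ₐ[k] K ⊗[k] (A ⧸ I.radical) := Algebra.TensorProduct.map (AlgHom.id k K) q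
  have hker : RingHom.ker φ = (I.radical).map ff := by
    rw [show RingHom.ker φ = RingHom.ker (Algebra.TensorProduct.map (AlgHom.id k K) q) from rfl,
      Algebra.TensorProduct.lTensor_ker q (Ideal.Quotient.mkₐ_surjective k I.radical)]
    congr 1
    exact Ideal.Quotient.mkₐ_ker k I.radical
  haveI : IsReduced (A ⧸ I.radical) :=
    (Ideal.isRadical_iff_quotient_reduced _).mp (Ideal.radical_isRadical I)
  haveI : IsReduced (K ⊗[k] (A ⧸ I.radical)) := closureTensorReduced k (A ⧸ I.radical)
  have hle : (I.map ff.toRingHom).radical ≤ (I.radical).map ff := by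
    intro x hx
    rw [← hker, RingHom.mem_ker]
    refine IsNilpotent.eq_zero ?_
    obtain ⟨n, hn⟩ := hx
    refine ⟨n, ?_⟩
    rw [← map_pow]
    have hx' : x ^ n ∈ (I.radical).map ff := by
      rw [hmapeq] at hn
      exact Ideal.map_mono Ideal.le_radical hn
    rw [← hker] at hx'
    exact hx'
  calc (I.map ff.toRingHom).radical ^ μ ≤ ((I.radical).map ff) ^ μ :=
        Ideal.pow_right_mono hle μ
    _ = (I.radical ^ μ).map ff := (Ideal.map_pow _ _ _).symm
    _ ≤ I.map ff.toRingHom := by rw [hmapeq]; exact Ideal.map_mono hNoether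
end

section
/- Let R be a commutative differential ring with derivation D, and let I be a differential ideal of R. Then the radical √I is also a differential ideal of R, provided R is a ℚ-algebra. -/
theorem stmt_5 {R : Type*} [CommRing R] [Algebra ℚ R] (D : Derivation ℚ R R)
    (I : Ideal R) (hI : ∀ a ∈ I, D a ∈ I) :
    ∀ a ∈ I.radical, D a ∈ I.radical := by
  intro a ha
  obtain ⟨n, hn⟩ := ha
  have qsmul : ∀ (q : ℚ) (x : R), x ∈ I → q • x ∈ I := by
    intro q x hx
    rw [← smul_one_mul q x]
    exact I.mul_mem_left _ hx
  have key : ∀ k, k ≤ n → a ^ (n - k) * (D a) ^ (2 * k) ∈ I := by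
    intro k
    induction k with
    | zero => intro _; simpa using hn
    | succ k ih =>
      intro hk
      have hk' : k ≤ n := Nat.le_of_succ_le hk
      have h1 : D (a ^ (n - k) * (D a) ^ (2 * k)) ∈ I := hI _ (ih hk')
      rw [D.leibniz, D.leibniz_pow, D.leibniz_pow] at h1
      have h2 : (D a) * (a ^ (n - k) • ((2 * k) • (D a) ^ (2 * k - 1) • D (D a)) +
          (D a) ^ (2 * k) • ((n - k) • a ^ (n - k - 1) • D a)) ∈ I :=
        I.mul_mem_left _ h1
      have h3 : (D a) * (a ^ (n - k) • ((2 * k) • (D a) ^ (2 * k - 1) • D (D a))) ∈ I := by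
        rcases Nat.eq_zero_or_pos k with hk0 | hk0
        · subst hk0; simp
        · have := I.mul_mem_left (((2 * k : ℕ) : R) * (D (D a))) (ih hk')
          simp only [smul_eq_mul, nsmul_eq_mul] at this ⊢
          convert this using 1
          have : 2 * k = (2 * k - 1) + 1 := by omega
          rw [this, pow_succ]
          push_cast
          ring
      have h4 : (D a) * ((D a) ^ (2 * k) • ((n - k) • a ^ (n - k - 1) • D a)) ∈ I := by
        have := I.sub_mem h2 h3
        convert this using 1
        ring
      have hz : (D a) * ((D a) ^ (2 * k) • ((n - k) • a ^ (n - k - 1) • D a)) =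
          (n - k) • (a ^ (n - (k + 1)) * (D a) ^ (2 * (k + 1))) := by
        have h6 : n - (k + 1) = n - k - 1 := by omega
        rw [h6]
        simp only [smul_eq_mul, nsmul_eq_mul]
        ring
      rw [hz] at h4
      have hnk : ((n - k : ℕ) : ℚ) ≠ 0 := by
        have : 0 < n - k := Nat.sub_pos_of_lt hk
        exact_mod_cast this.ne'
      have heq : a ^ (n - (k + 1)) * (D a) ^ (2 * (k + 1)) =
          ((n - k : ℕ) : ℚ)⁻¹ • ((n - k) • (a ^ (n - (k + 1)) * (D a) ^ (2 * (k + 1)))) := by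
        rw [← Nat.cast_smul_eq_nsmul ℚ, smul_smul, inv_mul_cancel₀ hnk, one_smul]
      rw [heq]
      exact qsmul _ _ h4
  have := key n le_rfl
  simp only [Nat.sub_self, pow_zero, one_mul] at this
  exact ⟨2 * n, this⟩
end

section
/- Let R be a commutative differential ring with derivation D and a an element of R. If a^n belongs to a differential ideal I for some n, then a·D(a) raised to a suitable power lies in I; specifically, a^n ∈ I implies (D(a))^{2n-1}·a ∈ I when R is a ℚ-algebra. -/
private lemma aux_mul_deriv_pow {R : Type*} [CommRing R] [Algebra ℚ R]
    (D : Derivation ℚ R R) (x : R) (j : ℕ) :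
    x * D (x ^ j) = j • (D x * x ^ j) := by
  cases j with
  | zero => simp
  | succ m =>
    rw [Derivation.leibniz_pow]
    simp only [smul_eq_mul, nsmul_eq_mul, Nat.add_sub_cancel, Nat.cast_succ]
    ring

theorem stmt_6 {R : Type*} [CommRing R] [Algebra ℚ R] (D : Derivation ℚ R R)
    (I : Ideal R) (hI : ∀ a ∈ I, D a ∈ I) (a : R) (n : ℕ) (hn : 0 < n)
    (ha : a ^ n ∈ I) :
    (D a) ^ (2 * n - 1) * a ∈ I := by
  have key : ∀ k, k ≤ n → (D a) ^ (2 * k) * a ^ (n - k) ∈ I := by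
    intro k
    induction k with
    | zero => intro _; simpa using ha
    | succ k ih =>
      intro hk
      have ihk := ih (Nat.le_of_succ_le hk)
      obtain ⟨m, hm⟩ : ∃ m, n - k = m + 1 :=
        ⟨n - k - 1, (Nat.succ_pred_eq_of_pos (Nat.sub_pos_of_lt hk)).symm⟩
      have hm' : n - (k + 1) = m := by omega
      rw [hm] at ihk
      rw [hm']
      have haux := aux_mul_deriv_pow D (D a) (2 * k)
      have e1 : D a * D ((D a) ^ (2 * k) * a ^ (m + 1))
          = (2 * k) • (D (D a) * ((D a) ^ (2 * k) * a ^ (m + 1)))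
            + (m + 1) • ((D a) ^ (2 * (k + 1)) * a ^ m) := by
        rw [Derivation.leibniz, Derivation.leibniz_pow]
        simp only [smul_eq_mul, nsmul_eq_mul, Nat.add_sub_cancel, Nat.cast_mul,
          Nat.cast_ofNat, Nat.cast_succ, Nat.cast_add, Nat.cast_one] at haux ⊢
        linear_combination a ^ (m + 1) * haux
      have h2 : D a * D ((D a) ^ (2 * k) * a ^ (m + 1)) ∈ I :=
        I.mul_mem_left _ (hI _ ihk)
      have h3 : (2 * k) • (D (D a) * ((D a) ^ (2 * k) * a ^ (m + 1))) ∈ I := by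
        rw [nsmul_eq_mul]
        exact I.mul_mem_left _ (I.mul_mem_left _ ihk)
      have h4 : (m + 1) • ((D a) ^ (2 * (k + 1)) * a ^ m) ∈ I := by
        have := I.sub_mem h2 h3
        rwa [e1, add_sub_cancel_left] at this
      have h5 : (((m : ℚ) + 1)⁻¹) • ((m + 1) • ((D a) ^ (2 * (k + 1)) * a ^ m)) ∈ I := by
        rw [Algebra.smul_def]
        exact I.mul_mem_left _ h4
      have h6 : (((m : ℚ) + 1)⁻¹) • ((m + 1) • ((D a) ^ (2 * (k + 1)) * a ^ m))
          = (D a) ^ (2 * (k + 1)) * a ^ m := by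
        rw [← Nat.cast_smul_eq_nsmul ℚ, smul_smul]
        push_cast
        rw [inv_mul_cancel₀ (by positivity), one_smul]
      rwa [h6] at h5
  obtain ⟨p, rfl⟩ := Nat.exists_eq_succ_of_ne_zero hn.ne'
  have h := I.mul_mem_left (D a) (key p p.le_succ)
  have : 2 * (p + 1) - 1 = 2 * p + 1 := by omega
  rw [this]
  have h2 : p + 1 - p = 1 := by omega
  rw [h2] at h
  simpa [pow_succ, mul_comm, mul_assoc, mul_left_comm] using h
end

section
/- Let g_1, ..., g_m be differential polynomials over ℂ in variables x_1, ..., x_n (with derivation sending x_i^{(j)} to x_i^{(j+1)}), N a positive integer, and f_1, ..., f_n formal power series in ℂ[[t]]. If for every i the power series g_i(f_1, ..., f_n) (obtained by substituting x_j^{(l)} ↦ f_j^{(l)}) has t-adic valuation at least N, then 1 does not lie in the ideal generated by all derivatives up to order N-1 of g_1, ..., g_m. -/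
open PowerSeries MvPolynomial

theorem stmt_7 (n m N : ℕ) (hN : 0 < N) (g : Fin m → MvPolynomial (Fin n × ℕ) ℂ)
    (f : Fin n → PowerSeries ℂ)
    -- D : the derivation on ℂ[x_∞] sending x_i^{(j)} to x_i^{(j+1)}
    (D : Derivation ℂ (MvPolynomial (Fin n × ℕ) ℂ) (MvPolynomial (Fin n × ℕ) ℂ))
    (hD : D = MvPolynomial.mkDerivation ℂ (fun p : Fin n × ℕ => X (p.1, p.2 + 1)))
    -- φ : the substitution x_i^{(j)} ↦ (d/dt)^j (f i)
    (φ : MvPolynomial (Fin n × ℕ) ℂ →ₐ[ℂ] PowerSeries ℂ)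
    (hφ : φ = MvPolynomial.aeval
      (fun p : Fin n × ℕ => ((PowerSeries.derivative ℂ).toLinearMap ^ p.2) (f p.1)))
    -- each g i vanishes to order at least N after substitution
    (hval : ∀ i : Fin m, ∀ l < N, PowerSeries.coeff l (φ (g i)) = 0) :
    (1 : MvPolynomial (Fin n × ℕ) ℂ) ∉
      Ideal.span {h | ∃ (i : Fin m) (j : ℕ), j ≤ N - 1 ∧ h = (D.toLinearMap ^ j) (g i)} := by
  -- φ intertwines D and derivative
  have hcomm : ∀ p, φ (D p) = PowerSeries.derivative ℂ (φ p) := by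
    intro p
    induction p using MvPolynomial.induction_on with
    | C a =>
      simp [hD, hφ]
    | add p q hp hq =>
      simp [map_add, hp, hq]
    | mul_X p i hp =>
      rw [D.leibniz]
      have hDX : D (X i) = X (i.1, i.2 + 1) := by
        simp [hD, MvPolynomial.mkDerivation_X]
      have hφX : φ (X (i.1, i.2 + 1)) = PowerSeries.derivative ℂ (φ (X i)) := by
        simp [hφ, MvPolynomial.aeval_X, pow_succ', Module.End.mul_apply]
      simp only [smul_eq_mul, map_add, map_mul, hp, hDX, hφX]
      rw [(PowerSeries.derivative ℂ).leibniz]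
      simp only [smul_eq_mul]
      try ring
  have hcomm' : ∀ (j : ℕ) (p), φ ((D.toLinearMap ^ j) p)
      = ((PowerSeries.derivative ℂ).toLinearMap ^ j) (φ p) := by
    intro j
    induction j with
    | zero => intro p; simp
    | succ j ih =>
      intro p
      rw [pow_succ, pow_succ, Module.End.mul_apply, Module.End.mul_apply]
      rw [show (D.toLinearMap p) = D p from rfl, ih, hcomm]
      rfl
  -- coefficient of iterated derivative
  have hc : ∀ (j l : ℕ) (s : PowerSeries ℂ), ∃ c : ℂ,
      PowerSeries.coeff l (((PowerSeries.derivative ℂ).toLinearMap ^ j) s)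
        = c * PowerSeries.coeff (l + j) s := by
    intro j
    induction j with
    | zero => intro l s; exact ⟨1, by simp⟩
    | succ j ih =>
      intro l s
      rw [pow_succ, Module.End.mul_apply]
      obtain ⟨c, hcc⟩ := ih l (PowerSeries.derivative ℂ s)
      refine ⟨c * ((l + j : ℕ) + 1), ?_⟩
      have h2 : ((D.toLinearMap : _) : _) = D := rfl
      rw [show ((PowerSeries.derivative ℂ).toLinearMap s) = PowerSeries.derivative ℂ s from rfl,
        hcc, PowerSeries.coeff_derivative, show l + (j + 1) = l + j + 1 by omega]
      push_cast
      ring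
  intro hmem
  have hker : Ideal.span {h | ∃ (i : Fin m) (j : ℕ), j ≤ N - 1 ∧ h = (D.toLinearMap ^ j) (g i)}
      ≤ RingHom.ker ((PowerSeries.constantCoeff).comp φ.toRingHom) := by
    rw [Ideal.span_le]
    rintro h ⟨i, j, hj, rfl⟩
    have hjN : j < N := by omega
    simp only [SetLike.mem_coe, RingHom.mem_ker, RingHom.comp_apply]
    rw [← PowerSeries.coeff_zero_eq_constantCoeff_apply]
    have : φ.toRingHom ((D.toLinearMap ^ j) (g i)) = φ ((D.toLinearMap ^ j) (g i)) := rfl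
    rw [this, hcomm']
    obtain ⟨c, hcc⟩ := hc j 0 (φ (g i))
    rw [hcc, zero_add, hval i j hjN, mul_zero]
  have := hker hmem
  simp only [RingHom.mem_ker, RingHom.comp_apply, map_one] at this
  exact one_ne_zero this
end

section
/- Let d be a positive integer and B = (d+2 choose 2) − 1 = d(d+3)/2. If P(x, y) ∈ ℂ[x, y] is a polynomial of degree at most d such that the analytic function P(t, e^t) vanishes to order at least B + 1 at t = 0, then P(t, e^t) is identically zero. -/
open PowerSeries

section
open Polynomial Finset

noncomputable section

def aux8S (c : ℂ) (q : ℂ[X]) : ℂ[X] := Polynomial.derivative q + Polynomial.C c * q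

def aux8T (m : ℕ) (f : ℂ⟦X⟧) : ℂ⟦X⟧ := d⁄dX ℂ f - PowerSeries.C (m : ℂ) * f

lemma aux8S_natDegree_le (c : ℂ) (q : ℂ[X]) : (aux8S c q).natDegree ≤ q.natDegree := by
  refine (natDegree_add_le _ _).trans (max_le ?_ ?_)
  · exact (natDegree_derivative_le q).trans (Nat.sub_le _ _)
  · exact natDegree_C_mul_le c q

lemma aux8S_iter_natDegree_le (c : ℂ) (k : ℕ) (q : ℂ[X]) :
    ((aux8S c)^[k] q).natDegree ≤ q.natDegree := by
  induction k generalizing q with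
  | zero => simp
  | succ k ih =>
    rw [Function.iterate_succ_apply]
    exact (ih _).trans (aux8S_natDegree_le c q)

lemma aux8S_inj (c : ℂ) (hc : c ≠ 0) (q : ℂ[X]) (h : aux8S c q = 0) : q = 0 := by
  by_contra hq
  have h1 : (aux8S c q).coeff q.natDegree = 0 := by rw [h]; simp
  rw [aux8S, Polynomial.coeff_add, Polynomial.coeff_C_mul, Polynomial.coeff_derivative,
    Polynomial.coeff_natDegree_succ_eq_zero] at h1
  simp only [zero_mul, zero_add] at h1
  exact hq (Polynomial.leadingCoeff_eq_zero.mp (by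
    rcases mul_eq_zero.mp h1 with h2 | h2
    · exact absurd h2 hc
    · exact h2))

lemma aux8S_iter_inj (c : ℂ) (hc : c ≠ 0) (k : ℕ) (q : ℂ[X])
    (h : (aux8S c)^[k] q = 0) : q = 0 := by
  induction k generalizing q with
  | zero => simpa using h
  | succ k ih =>
    rw [Function.iterate_succ_apply] at h
    exact aux8S_inj c hc q (ih _ h)

lemma aux8S_zero_iter (q : ℂ[X]) (k : ℕ) (h : q.natDegree < k) : (aux8S 0)^[k] q = 0 := by
  have hs : aux8S 0 = fun q => Polynomial.derivative q := by
    funext q; simp [aux8S]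
  rw [hs]
  exact Polynomial.iterate_derivative_eq_zero h

lemma aux8_deriv_exp : d⁄dX ℂ (exp ℂ) = exp ℂ := by
  ext n
  rw [PowerSeries.coeff_derivative, coeff_exp, coeff_exp]
  rw [show ((n:ℂ) + 1) = algebraMap ℚ ℂ ((n:ℚ)+1) by push_cast; ring]
  rw [← map_mul]
  congr 1
  rw [Nat.factorial_succ]
  field_simp
  push_cast; ring

lemma aux8_deriv_exp_pow (j : ℕ) :
    d⁄dX ℂ ((exp ℂ) ^ j) = (j : ℂ⟦X⟧) * (exp ℂ) ^ j := by
  rcases Nat.eq_zero_or_pos j with h | h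
  · subst h; simp
  · rw [Derivation.leibniz_pow, aux8_deriv_exp, smul_eq_mul, ← pow_succ,
      Nat.sub_add_cancel h, nsmul_eq_mul]

lemma aux8T_term (m j : ℕ) (q : ℂ[X]) :
    aux8T m ((q : ℂ⟦X⟧) * (exp ℂ) ^ j)
      = ((aux8S ((j : ℂ) - (m : ℂ)) q : ℂ[X]) : ℂ⟦X⟧) * (exp ℂ) ^ j := by
  rw [aux8T, Derivation.leibniz, aux8_deriv_exp_pow, PowerSeries.derivative_coe,
    aux8S, Polynomial.coe_add, Polynomial.coe_mul, Polynomial.coe_C, map_sub,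
    ← map_natCast (PowerSeries.C (R := ℂ)) j, smul_eq_mul, smul_eq_mul]
  ring

lemma aux8T_sum {s : Finset ℕ} (m : ℕ) (F : ℕ → ℂ⟦X⟧) :
    aux8T m (∑ j ∈ s, F j) = ∑ j ∈ s, aux8T m (F j) := by
  simp [aux8T, map_sum, Finset.mul_sum, Finset.sum_sub_distrib]

lemma aux8T_coeff {N : ℕ} (m : ℕ) (f : ℂ⟦X⟧) (h : ∀ l < N, PowerSeries.coeff l f = 0)
    (l : ℕ) (hl : l < N - 1) : PowerSeries.coeff l (aux8T m f) = 0 := by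
  rw [aux8T, map_sub, PowerSeries.coeff_derivative, PowerSeries.coeff_C_mul,
    h l (lt_of_lt_of_le hl (Nat.sub_le _ _)), h (l+1) (by omega), mul_zero, zero_mul, sub_zero]

lemma aux8T_iter_coeff {N : ℕ} (m : ℕ) (k : ℕ) (f : ℂ⟦X⟧)
    (h : ∀ l < N, PowerSeries.coeff l f = 0)
    (l : ℕ) (hl : l < N - k) : PowerSeries.coeff l ((aux8T m)^[k] f) = 0 := by
  induction k generalizing l f with
  | zero => exact h l (by omega)
  | succ k ih =>
    rw [Function.iterate_succ_apply']
    exact aux8T_coeff (N := N - k) m _ (fun l' hl' => ih f h l' hl') l (by omega)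

lemma aux8T_iter_sum (m k : ℕ) (s : Finset ℕ) (q : ℕ → ℂ[X]) :
    (aux8T m)^[k] (∑ j ∈ s, (q j : ℂ⟦X⟧) * (exp ℂ) ^ j)
      = ∑ j ∈ s, (((aux8S ((j : ℂ) - (m : ℂ)))^[k] (q j) : ℂ[X]) : ℂ⟦X⟧) * (exp ℂ) ^ j := by
  induction k generalizing q with
  | zero => simp
  | succ k ih =>
    rw [Function.iterate_succ_apply, aux8T_sum]
    have : (∑ j ∈ s, aux8T m ((q j : ℂ⟦X⟧) * (exp ℂ) ^ j))
        = ∑ j ∈ s, (((aux8S ((j : ℂ) - (m : ℂ)) (q j) : ℂ[X]) : ℂ⟦X⟧) * (exp ℂ) ^ j) := by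
      exact Finset.sum_congr rfl fun j _ => aux8T_term m j (q j)
    rw [this, ih]
    exact Finset.sum_congr rfl fun j _ => by rw [← Function.iterate_succ_apply]

lemma aux8_unit_coeff (g u : ℂ⟦X⟧) (hu : PowerSeries.constantCoeff u = 1) (N : ℕ)
    (h : ∀ l < N, PowerSeries.coeff l (g * u) = 0) :
    ∀ l < N, PowerSeries.coeff l g = 0 := by
  intro l
  induction l using Nat.strong_induction_on with
  | _ l ih =>
    intro hl
    have h0 := h l hl
    rw [PowerSeries.coeff_mul] at h0
    rw [Finset.sum_eq_single (l, 0)] at h0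
    · rw [PowerSeries.coeff_zero_eq_constantCoeff, hu, mul_one] at h0
      exact h0
    · intro b hb hne
      have hb1 : b.1 + b.2 = l := Finset.HasAntidiagonal.mem_antidiagonal.mp hb
      have hlt : b.1 < l := by
        rcases Nat.lt_or_ge b.1 l with h' | h'
        · exact h'
        · exfalso; apply hne
          have : b.1 = l := le_antisymm (by omega) h'
          have : b.2 = 0 := by omega
          exact Prod.ext (by omega) this
      rw [ih b.1 hlt (by omega), zero_mul]
    · intro hmem
      exact absurd (Finset.HasAntidiagonal.mem_antidiagonal.mpr (by simp)) hmem

lemma aux8_key (e : ℕ → ℕ) (m : ℕ) : ∀ (q : ℕ → ℂ[X]),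
    (∀ j ≤ m, (q j).natDegree ≤ e j) →
    (∀ l < ∑ j ∈ Finset.range (m+1), (e j + 1),
      PowerSeries.coeff l (∑ j ∈ Finset.range (m+1), (q j : ℂ⟦X⟧) * (exp ℂ) ^ j) = 0) →
    ∀ j ≤ m, q j = 0 := by
  induction m with
  | zero =>
    intro q hdeg hcoeff j hj
    interval_cases j
    have h0 : ∀ l < e 0 + 1, PowerSeries.coeff l ((q 0 : ℂ⟦X⟧)) = 0 := by
      intro l hl
      have := hcoeff l (by simpa using hl)
      simpa using this
    ext n
    rcases Nat.lt_or_ge n (e 0 + 1) with h' | h'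
    · have := h0 n h'
      rwa [Polynomial.coeff_coe] at this
    · simp only [Polynomial.coeff_zero]
      exact Polynomial.coeff_eq_zero_of_natDegree_lt (by
        have := hdeg 0 le_rfl; omega)
  | succ m ih =>
    intro q hdeg hcoeff
    set k := e (m+1) + 1 with hk
    set N := ∑ j ∈ Finset.range (m+2), (e j + 1) with hN
    have hNsplit : N = (∑ j ∈ Finset.range (m+1), (e j + 1)) + k := by
      rw [hN, Finset.sum_range_succ]
    set r : ℕ → ℂ[X] := fun j => (aux8S ((j : ℂ) - ((m+1 : ℕ) : ℂ)))^[k] (q j) with hr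
    have hr_top : r (m+1) = 0 := by
      have hc : (((m+1 : ℕ) : ℂ)) - ((m+1 : ℕ) : ℂ) = 0 := sub_self _
      rw [hr]
      simp only [hc]
      exact aux8S_zero_iter _ k (by have := hdeg (m+1) le_rfl; omega)
    have hTf := aux8T_iter_sum (m+1) k (Finset.range (m+2)) q
    have hcoeffT : ∀ l < ∑ j ∈ Finset.range (m+1), (e j + 1),
        PowerSeries.coeff l (∑ j ∈ Finset.range (m+1), (r j : ℂ⟦X⟧) * (exp ℂ) ^ j) = 0 := by
      intro l hl
      have h1 : PowerSeries.coeff l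
          ((aux8T (m+1))^[k] (∑ j ∈ Finset.range (m+2), (q j : ℂ⟦X⟧) * (exp ℂ) ^ j)) = 0 :=
        aux8T_iter_coeff (N := N) (m+1) k _ hcoeff l (by omega)
      rw [hTf] at h1
      rw [Finset.sum_range_succ] at h1
      have : ((r (m+1) : ℂ[X]) : ℂ⟦X⟧) = 0 := by rw [hr_top]; exact Polynomial.coe_zero
      rw [show (((aux8S (((m+1:ℕ) : ℂ) - ((m+1:ℕ) : ℂ)))^[k] (q (m+1)) : ℂ[X]) : ℂ⟦X⟧)
          = ((r (m+1) : ℂ[X]) : ℂ⟦X⟧) from rfl, this, zero_mul, add_zero] at h1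
      exact h1
    have hq_low : ∀ j ≤ m, q j = 0 := by
      intro j hj
      have hrz : ∀ j ≤ m, r j = 0 := by
        apply ih r
        · intro j hj
          exact (aux8S_iter_natDegree_le _ k (q j)).trans (hdeg j (by omega))
        · exact hcoeffT
      have hc : ((j : ℂ) - ((m+1 : ℕ) : ℂ)) ≠ 0 := by
        rw [sub_ne_zero]
        exact_mod_cast (by omega : j ≠ m + 1)
      exact aux8S_iter_inj _ hc k (q j) (hrz j hj)
    have hq_top : q (m+1) = 0 := by
      have hf1 : (∑ j ∈ Finset.range (m+2), (q j : ℂ⟦X⟧) * (exp ℂ) ^ j)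
          = (q (m+1) : ℂ⟦X⟧) * (exp ℂ) ^ (m+1) := by
        rw [Finset.sum_range_succ]
        have : ∀ j ∈ Finset.range (m+1), (q j : ℂ⟦X⟧) * (exp ℂ) ^ j = 0 := by
          intro j hj
          rw [hq_low j (by simpa using Nat.lt_succ_iff.mp (Finset.mem_range.mp hj)),
            Polynomial.coe_zero, zero_mul]
        rw [Finset.sum_eq_zero this, zero_add]
      have hcq : ∀ l < N, PowerSeries.coeff l ((q (m+1) : ℂ⟦X⟧)) = 0 := by
        refine aux8_unit_coeff _ ((exp ℂ) ^ (m+1)) ?_ N ?_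
        · rw [map_pow, constantCoeff_exp, one_pow]
        · intro l hl
          rw [← hf1]
          exact hcoeff l hl
      ext n
      rcases Nat.lt_or_ge n N with h' | h'
      · have := hcq n h'
        rwa [Polynomial.coeff_coe] at this
      · simp only [Polynomial.coeff_zero]
        exact Polynomial.coeff_eq_zero_of_natDegree_lt (by
          have := hdeg (m+1) le_rfl; omega)
    intro j hj
    rcases Nat.lt_or_ge j (m+1) with h' | h'
    · exact hq_low j (by omega)
    · have : j = m + 1 := by omega
      rw [this]; exact hq_top



lemma aux8_sum_choose (n : ℕ) : ∑ j ∈ Finset.range n, (j + 1) = (n+1).choose 2 := by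
  induction n with
  | zero => simp
  | succ n ih =>
    rw [Finset.sum_range_succ, ih]
    have h2 : (n+1+1).choose 2 = (n+1).choose 1 + (n+1).choose 2 := Nat.choose_succ_succ (n+1) 1
    rw [h2, Nat.choose_one_right]
    omega


end

theorem stmt_8 (d : ℕ) (hd : 0 < d) (B : ℕ) (hB : B = Nat.choose (d + 2) 2 - 1)
    (P : MvPolynomial (Fin 2) ℂ) (hdeg : P.totalDegree ≤ d)
    -- P(t, e^t) vanishes to order at least B + 1 at t = 0
    (hvan : ∀ l ≤ B, PowerSeries.coeff l
      (MvPolynomial.aeval ![PowerSeries.X, PowerSeries.exp ℂ] P) = 0) :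
    MvPolynomial.aeval ![PowerSeries.X, PowerSeries.exp ℂ] P = 0 := by
  classical
  -- support bound
  have hsupp : ∀ s ∈ P.support, s 0 + s 1 ≤ d := by
    intro s hs
    have h1 : (s.sum fun _ e => e) ≤ P.totalDegree := MvPolynomial.le_totalDegree hs
    have h2 : (s.sum fun _ e => e) = s 0 + s 1 := by
      rw [Finsupp.sum_fintype _ _ (fun _ => rfl), Fin.sum_univ_two]
    omega
  set q : ℕ → ℂ[X] := fun j =>
    ∑ s ∈ P.support.filter (fun s => s 1 = j),
      Polynomial.C (MvPolynomial.coeff s P) * Polynomial.X ^ (s 0) with hq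
  have hqdeg : ∀ j ≤ d, (q j).natDegree ≤ d - j := by
    intro j hj
    apply Polynomial.natDegree_sum_le_of_forall_le
    intro s hs
    rw [Finset.mem_filter] at hs
    refine (Polynomial.natDegree_C_mul_le _ _).trans ?_
    rw [Polynomial.natDegree_X_pow]
    have := hsupp s hs.1
    omega
  -- decomposition
  have hf : MvPolynomial.aeval ![PowerSeries.X, PowerSeries.exp ℂ] P
      = ∑ j ∈ Finset.range (d+1), (q j : ℂ⟦X⟧) * (exp ℂ) ^ j := by
    have hmaps : ∀ s ∈ P.support, s 1 ∈ Finset.range (d+1) := fun s hs =>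
      Finset.mem_range.mpr (by have := hsupp s hs; omega)
    rw [MvPolynomial.aeval_def, MvPolynomial.eval₂_eq']
    rw [← Finset.sum_fiberwise_of_maps_to (g := fun s => s 1) hmaps _]
    refine Finset.sum_congr rfl fun j hj => ?_
    have hcoe : ((q j : ℂ[X]) : ℂ⟦X⟧)
        = ∑ s ∈ P.support.filter (fun s => s 1 = j),
            PowerSeries.C (MvPolynomial.coeff s P) * PowerSeries.X ^ (s 0) := by
      rw [hq]
      rw [← Polynomial.coeToPowerSeries.ringHom_apply, map_sum]
      refine Finset.sum_congr rfl fun s _ => ?_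
      rw [Polynomial.coeToPowerSeries.ringHom_apply, Polynomial.coe_mul, Polynomial.coe_C,
        Polynomial.coe_pow, Polynomial.coe_X]
    rw [hcoe, Finset.sum_mul]
    refine Finset.sum_congr rfl fun s hs => ?_
    rw [Finset.mem_filter] at hs
    rw [Fin.prod_univ_two]
    simp only [Matrix.cons_val_zero, Matrix.cons_val_one, Matrix.head_cons]
    rw [hs.2]
    rw [show algebraMap ℂ ℂ⟦X⟧ (MvPolynomial.coeff s P) = PowerSeries.C (MvPolynomial.coeff s P)
      from rfl]
    ring
  -- the count
  have hsum : ∑ j ∈ Finset.range (d+1), ((d - j) + 1) = B + 1 := by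
    have h1 : ∑ j ∈ Finset.range (d+1), ((d - j) + 1)
        = ∑ j ∈ Finset.range (d+1), (j + 1) := by
      have := Finset.sum_range_reflect (fun j => j + 1) (d+1)
      simpa using this
    rw [h1, aux8_sum_choose]
    have hc : (d+1+1).choose 2 = (d+2).choose 2 := rfl
    have hpos : 0 < (d+2).choose 2 := Nat.choose_pos (by omega)
    omega
  have hqzero : ∀ j ≤ d, q j = 0 := by
    apply aux8_key (fun j => d - j) d q hqdeg
    intro l hl
    rw [← hf]
    exact hvan l (by omega)
  rw [hf]
  refine Finset.sum_eq_zero fun j hj => ?_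
  rw [hqzero j (by have := Finset.mem_range.mp hj; omega), Polynomial.coe_zero, zero_mul]
end
end

section
/- For every positive integer d there exist rational numbers μ_{i,j} for 0 ≤ i + j ≤ d such that the function Σ μ_{i,j} t^i e^{jt} equals t^B + O(t^{B+1}) as t → 0, where B = (d+2 choose 2) − 1. Equivalently, the truncations to degree B of the power series t^i e^{jt} for 0 ≤ i+j ≤ d form a basis of the ℚ-vector space of polynomials of degree at most B. -/
open PowerSeries

noncomputable def Ee (j : ℕ) : PowerSeries ℚ := PowerSeries.mk fun n => (j : ℚ) ^ n / n.factorial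

lemma deriv_Ee (j : ℕ) : d⁄dX ℚ (Ee j) = (j : ℚ) • Ee j := by
  ext n
  simp only [Ee, coeff_derivative, coeff_mk, map_smul, smul_eq_mul, pow_succ,
    Nat.factorial_succ, Nat.cast_mul]
  have h1 : ((n + 1 : ℕ) : ℚ) ≠ 0 := by positivity
  have h2 : ((n.factorial : ℕ) : ℚ) ≠ 0 := Nat.cast_ne_zero.mpr n.factorial_ne_zero
  field_simp
  push_cast
  ring

lemma key_s11 : ∀ (n : ℕ) (s : Finset ℕ) (p : ℕ → Polynomial ℚ), s.Nonempty →
    (∀ j ∈ s, p j ≠ 0) →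
    (∑ j ∈ s, ((p j).natDegree + 1)) ≤ n →
    (∀ k < n, PowerSeries.coeff k (∑ j ∈ s, ((p j : PowerSeries ℚ)) * Ee j) = 0) → False := by
  intro n
  induction n with
  | zero =>
    intro s p hs hp hsum _
    obtain ⟨j, hj⟩ := hs
    have h1 : (p j).natDegree + 1 ≤ ∑ j ∈ s, ((p j).natDegree + 1) :=
      Finset.single_le_sum (f := fun j => (p j).natDegree + 1) (fun _ _ => Nat.zero_le _) hj
    omega
  | succ n ih =>
    intro s p hs hp hsum hvan
    set j₀ := s.min' hs with hj₀def
    have hj₀s : j₀ ∈ s := s.min'_mem hs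
    set q : ℕ → Polynomial ℚ := fun j => Polynomial.derivative (p j) + ((j : ℚ) - (j₀ : ℚ)) • p j
      with hqdef
    have hqne : ∀ j ∈ s, j ≠ j₀ → q j ≠ 0 ∧ (q j).natDegree = (p j).natDegree := by
      intro j hjs hne
      have hc : ((j : ℚ) - (j₀ : ℚ)) ≠ 0 := by
        exact sub_ne_zero.mpr (fun h => hne (Nat.cast_injective h))
      have hd0 : (Polynomial.derivative (p j)).coeff (p j).natDegree = 0 := by
        rw [Polynomial.coeff_derivative, Polynomial.coeff_natDegree_succ_eq_zero, zero_mul]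
      have hlead : (q j).coeff (p j).natDegree = ((j : ℚ) - (j₀ : ℚ)) * (p j).leadingCoeff := by
        simp only [hqdef, Polynomial.coeff_add, Polynomial.coeff_smul, smul_eq_mul, hd0, zero_add]
        rfl
      have hlne : (q j).coeff (p j).natDegree ≠ 0 := by
        rw [hlead]
        exact mul_ne_zero hc (Polynomial.leadingCoeff_ne_zero.mpr (hp j hjs))
      refine ⟨fun h => hlne (by simp [h]), le_antisymm ?_ (Polynomial.le_natDegree_of_ne_zero hlne)⟩
      refine le_trans (Polynomial.natDegree_add_le _ _) (max_le ?_ ?_)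
      · exact le_trans (Polynomial.natDegree_derivative_le _) (Nat.sub_le _ _)
      · exact Polynomial.natDegree_smul_le _ _
    have hF' : d⁄dX ℚ (∑ j ∈ s, ((p j : PowerSeries ℚ)) * Ee j)
        - (j₀ : ℚ) • (∑ j ∈ s, ((p j : PowerSeries ℚ)) * Ee j)
        = ∑ j ∈ s, ((q j : PowerSeries ℚ)) * Ee j := by
      rw [map_sum, Finset.smul_sum, ← Finset.sum_sub_distrib]
      refine Finset.sum_congr rfl fun j hj => ?_
      have hsm : (((((j : ℚ) - (j₀ : ℚ)) • p j : Polynomial ℚ)) : PowerSeries ℚ)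
          = PowerSeries.C ((j : ℚ) - (j₀ : ℚ)) * ((p j : PowerSeries ℚ)) := by
        rw [Polynomial.smul_eq_C_mul, Polynomial.coe_mul, Polynomial.coe_C]
      rw [Derivation.leibniz, deriv_Ee, PowerSeries.derivative_coe, hqdef]
      simp only [Polynomial.coe_add, hsm, smul_eq_mul,
        PowerSeries.smul_eq_C_mul, map_sub]
      ring
    have hvan' : ∀ k < n, PowerSeries.coeff k (∑ j ∈ s, ((q j : PowerSeries ℚ)) * Ee j) = 0 := by
      intro k hk
      rw [← hF', map_sub, PowerSeries.coeff_derivative, map_smul, smul_eq_mul,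
        hvan (k + 1) (by omega), hvan k (by omega)]
      ring
    by_cases hs' : (s.filter (fun j => q j ≠ 0)).Nonempty
    · set s' := s.filter (fun j => q j ≠ 0) with hs'def
      have hsub : s' ⊆ s := Finset.filter_subset _ _
      have hq0 : ∀ j ∈ s', q j ≠ 0 := fun j hj => (Finset.mem_filter.mp hj).2
      have hresum : ∑ j ∈ s', ((q j : PowerSeries ℚ)) * Ee j
          = ∑ j ∈ s, ((q j : PowerSeries ℚ)) * Ee j := by
        apply Finset.sum_filter_of_ne
        intro j _ hne h0
        exact hne (by rw [h0, Polynomial.coe_zero, zero_mul])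
      have hbound : ∑ j ∈ s', ((q j).natDegree + 1) ≤ n := by
        have hsplit : ∑ j ∈ s.erase j₀, ((p j).natDegree + 1) + ((p j₀).natDegree + 1)
            = ∑ j ∈ s, ((p j).natDegree + 1) := Finset.sum_erase_add s _ hj₀s
        by_cases hj₀' : j₀ ∈ s'
        · have hqd : (q j₀).natDegree + 1 ≤ (p j₀).natDegree := by
            have hder : Polynomial.derivative (p j₀) ≠ 0 := by
              have := hq0 j₀ hj₀'
              simpa [hqdef] using this
            have hnd : (p j₀).natDegree ≠ 0 := by
              intro h0
              exact hder (by
                rw [Polynomial.eq_C_of_natDegree_eq_zero h0]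
                simp)
            have := Polynomial.natDegree_derivative_lt (p := p j₀) hnd
            have hq₀eq : q j₀ = Polynomial.derivative (p j₀) := by simp [hqdef]
            rw [hq₀eq]
            omega
          have hsplit' : ∑ j ∈ s'.erase j₀, ((q j).natDegree + 1) + ((q j₀).natDegree + 1)
              = ∑ j ∈ s', ((q j).natDegree + 1) := Finset.sum_erase_add s' _ hj₀'
          have hcongr : ∑ j ∈ s'.erase j₀, ((q j).natDegree + 1)
              = ∑ j ∈ s'.erase j₀, ((p j).natDegree + 1) := by
            refine Finset.sum_congr rfl fun j hj => ?_
            have hjne : j ≠ j₀ := Finset.ne_of_mem_erase hj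
            rw [(hqne j (hsub (Finset.mem_of_mem_erase hj)) hjne).2]
          have hsubset2 : ∑ j ∈ s'.erase j₀, ((p j).natDegree + 1)
              ≤ ∑ j ∈ s.erase j₀, ((p j).natDegree + 1) :=
            Finset.sum_le_sum_of_subset (Finset.erase_subset_erase _ hsub)
          omega
        · have hcongr : ∑ j ∈ s', ((q j).natDegree + 1)
              = ∑ j ∈ s', ((p j).natDegree + 1) := by
            refine Finset.sum_congr rfl fun j hj => ?_
            have hjne : j ≠ j₀ := fun h => hj₀' (h ▸ hj)
            rw [(hqne j (hsub hj) hjne).2]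
          have hsubset2 : ∑ j ∈ s', ((p j).natDegree + 1)
              ≤ ∑ j ∈ s.erase j₀, ((p j).natDegree + 1) := by
            apply Finset.sum_le_sum_of_subset
            intro j hj
            exact Finset.mem_erase.mpr ⟨fun h => hj₀' (h ▸ hj), hsub hj⟩
          omega
      exact ih s' q hs' hq0 hbound (fun k hk => by rw [hresum]; exact hvan' k hk)
    · have hall : ∀ j ∈ s, q j = 0 := by
        intro j hj
        by_contra h
        exact hs' ⟨j, Finset.mem_filter.mpr ⟨hj, h⟩⟩
      have hsingle : s = {j₀} := by
        apply Finset.eq_singleton_iff_unique_mem.mpr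
        refine ⟨hj₀s, fun j hj => ?_⟩
        by_contra hne
        exact (hqne j hj hne).1 (hall j hj)
      have hder0 : Polynomial.derivative (p j₀) = 0 := by
        have := hall j₀ hj₀s
        simpa [hqdef] using this
      have hdeg0 : (p j₀).natDegree = 0 := Polynomial.natDegree_eq_zero_of_derivative_eq_zero hder0
      have hc0 : (p j₀).coeff 0 ≠ 0 := by
        intro h
        apply hp j₀ hj₀s
        rw [Polynomial.eq_C_of_natDegree_eq_zero hdeg0, h, map_zero]
      have h0 : PowerSeries.coeff 0 (∑ j ∈ s, ((p j : PowerSeries ℚ)) * Ee j)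
          = (p j₀).coeff 0 := by
        rw [hsingle, Finset.sum_singleton]
        simp [PowerSeries.coeff_zero_eq_constantCoeff, map_mul, Ee,
          Polynomial.constantCoeff_coe]
      exact hc0 (by rw [← h0]; exact hvan 0 (by omega))

set_option maxHeartbeats 2000000 in
lemma attach_sum (d : ℕ)
    (μ : ↥((Finset.range (d + 1) ×ˢ Finset.range (d + 1)).filter
        (fun p => p.1 + p.2 ≤ d)) → ℚ) (F : ℕ → PowerSeries ℚ) :
    ∑ x ∈ ((Finset.range (d + 1) ×ˢ Finset.range (d + 1)).filter
        (fun p => p.1 + p.2 ≤ d)).attach,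
      PowerSeries.C (μ x) * PowerSeries.X ^ x.1.1 * F x.1.2
    = ∑ p ∈ (Finset.range (d + 1) ×ˢ Finset.range (d + 1)).filter
        (fun p => p.1 + p.2 ≤ d),
      PowerSeries.C (if h : p ∈ (Finset.range (d + 1) ×ˢ Finset.range (d + 1)).filter
          (fun p => p.1 + p.2 ≤ d) then μ ⟨p, h⟩ else 0) * PowerSeries.X ^ p.1 * F p.2 := by
  rw [← Finset.sum_attach _ (fun p => PowerSeries.C
      (if h : p ∈ (Finset.range (d + 1) ×ˢ Finset.range (d + 1)).filter
          (fun p => p.1 + p.2 ≤ d) then μ ⟨p, h⟩ else 0) * PowerSeries.X ^ p.1 * F p.2)]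
  refine Finset.sum_congr rfl fun x _ => ?_
  rw [dif_pos x.2]

lemma rearrange {M : Type*} [AddCommMonoid M] (d : ℕ) (f : ℕ → ℕ → M) :
    ∑ p ∈ (Finset.range (d + 1) ×ˢ Finset.range (d + 1)).filter (fun p => p.1 + p.2 ≤ d),
      f p.1 p.2
    = ∑ j ∈ Finset.range (d + 1), ∑ i ∈ Finset.range (d + 1 - j), f i j := by
  rw [Finset.sum_filter, Finset.sum_product_right]
  refine Finset.sum_congr rfl fun j hj => ?_
  have hj' : j ≤ d := by simpa [Nat.lt_succ_iff] using hj
  rw [← Finset.sum_filter]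
  refine Finset.sum_congr ?_ fun _ _ => rfl
  ext i
  simp only [Finset.mem_filter, Finset.mem_range]
  omega

lemma sumdeg : ∀ d : ℕ, ∑ j ∈ Finset.range (d + 1), (d + 1 - j) = Nat.choose (d + 2) 2 := by
  intro d
  induction d with
  | zero => simp
  | succ d ih =>
    rw [Finset.sum_range_succ]
    have h1 : ∑ j ∈ Finset.range (d + 1), (d + 1 + 1 - j)
        = ∑ j ∈ Finset.range (d + 1), ((d + 1 - j) + 1) := by
      refine Finset.sum_congr rfl fun j hj => ?_
      have : j ≤ d := by simpa [Nat.lt_succ_iff] using hj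
      omega
    rw [h1, Finset.sum_add_distrib, ih, Finset.sum_const, Finset.card_range]
    simp only [smul_eq_mul, mul_one]
    have h4 : d + 1 + 2 = d + 3 := by omega
    rw [h4]
    have h3 : Nat.choose (d + 3) 2 = Nat.choose (d + 2) 1 + Nat.choose (d + 2) 2 :=
      Nat.choose_succ_succ (d + 2) 1
    rw [Nat.choose_one_right] at h3
    omega

noncomputable def Lmap (d B : ℕ) :
    ((↥((Finset.range (d + 1) ×ˢ Finset.range (d + 1)).filter
        (fun p => p.1 + p.2 ≤ d))) → ℚ) →ₗ[ℚ] (Fin (B + 1) → ℚ) where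
  toFun μ := fun k => PowerSeries.coeff (k : ℕ)
    (∑ x ∈ ((Finset.range (d + 1) ×ˢ Finset.range (d + 1)).filter
        (fun p => p.1 + p.2 ≤ d)).attach,
      PowerSeries.C (μ x) * PowerSeries.X ^ (x.1.1) * Ee (x.1.2))
  map_add' μ ν := by
    funext k
    simp [map_add, add_mul, Finset.sum_add_distrib]
  map_smul' c μ := by
    funext k
    simp [Finset.mul_sum, smul_eq_mul, map_mul, mul_assoc]

lemma Linj (d B : ℕ) (hB : Nat.choose (d + 2) 2 = B + 1) :
    Function.Injective (Lmap d B) := by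
  have h0 : ∀ μ, Lmap d B μ = 0 → μ = 0 := by
    intro μ hμ
    by_contra hne
    obtain ⟨x, hx⟩ := Function.ne_iff.mp hne
    simp only [Pi.zero_apply] at hx
    set ν : ℕ → ℕ → ℚ := fun i j =>
      if h : ((i, j) : ℕ × ℕ) ∈ (Finset.range (d + 1) ×ˢ Finset.range (d + 1)).filter
          (fun p => p.1 + p.2 ≤ d) then μ ⟨(i, j), h⟩ else 0
      with hνdef
    set P : ℕ → Polynomial ℚ :=
      fun j => ∑ i ∈ Finset.range (d + 1 - j), Polynomial.C (ν i j) * Polynomial.X ^ i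
      with hPdef
    have hν : ∀ p : ℕ × ℕ,
        (if h : p ∈ (Finset.range (d + 1) ×ˢ Finset.range (d + 1)).filter
            (fun p => p.1 + p.2 ≤ d) then μ ⟨p, h⟩ else 0) = ν p.1 p.2 := by
      intro p; rw [hνdef]
    have hGeq : (∑ x ∈ ((Finset.range (d + 1) ×ˢ Finset.range (d + 1)).filter
            (fun p => p.1 + p.2 ≤ d)).attach,
          PowerSeries.C (μ x) * PowerSeries.X ^ x.1.1 * Ee x.1.2)
        = ∑ j ∈ Finset.range (d + 1), ((P j : PowerSeries ℚ)) * Ee j := by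
      rw [attach_sum d μ Ee]
      calc ∑ p ∈ (Finset.range (d + 1) ×ˢ Finset.range (d + 1)).filter
              (fun p => p.1 + p.2 ≤ d),
            PowerSeries.C (if h : p ∈ (Finset.range (d + 1) ×ˢ Finset.range (d + 1)).filter
              (fun p => p.1 + p.2 ≤ d) then μ ⟨p, h⟩ else 0)
            * PowerSeries.X ^ p.1 * Ee p.2
          = ∑ p ∈ (Finset.range (d + 1) ×ˢ Finset.range (d + 1)).filter
              (fun p => p.1 + p.2 ≤ d),
              PowerSeries.C (ν p.1 p.2) * PowerSeries.X ^ p.1 * Ee p.2 :=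
            Finset.sum_congr rfl fun p _ => by rw [hν p]
        _ = ∑ j ∈ Finset.range (d + 1), ∑ i ∈ Finset.range (d + 1 - j),
              PowerSeries.C (ν i j) * PowerSeries.X ^ i * Ee j :=
            rearrange d (fun i j => PowerSeries.C (ν i j) * PowerSeries.X ^ i * Ee j)
        _ = ∑ j ∈ Finset.range (d + 1), ((P j : PowerSeries ℚ)) * Ee j := by
            refine Finset.sum_congr rfl fun j _ => ?_
            rw [← Finset.sum_mul]
            congr 1
            rw [hPdef, ← Polynomial.coeToPowerSeries.ringHom_apply, map_sum]
            refine Finset.sum_congr rfl fun i _ => ?_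
            simp [Polynomial.coeToPowerSeries.ringHom_apply, Polynomial.coe_mul,
              Polynomial.coe_pow, Polynomial.coe_C, Polynomial.coe_X]
    have hvan : ∀ k, k < B + 1 →
        PowerSeries.coeff k (∑ j ∈ Finset.range (d + 1), ((P j : PowerSeries ℚ)) * Ee j)
          = 0 := by
      intro k hk
      rw [← hGeq]
      exact congrFun hμ ⟨k, hk⟩
    have hxmem : x.1 ∈ (Finset.range (d + 1) ×ˢ Finset.range (d + 1)).filter
        (fun p => p.1 + p.2 ≤ d) := x.2
    rw [Finset.mem_filter, Finset.mem_product, Finset.mem_range, Finset.mem_range] at hxmem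
    obtain ⟨⟨hi, hj⟩, hij⟩ := hxmem
    set i₀ := x.1.1
    set j₀ := x.1.2
    have hcoeff : (P j₀).coeff i₀ = ν i₀ j₀ := by
      rw [hPdef]
      rw [Polynomial.finset_sum_coeff]
      have h1 : ∀ i ∈ Finset.range (d + 1 - j₀),
          (Polynomial.C (ν i j₀) * Polynomial.X ^ i).coeff i₀
            = if i = i₀ then ν i j₀ else 0 := by
        intro i _
        rw [Polynomial.coeff_C_mul, Polynomial.coeff_X_pow]
        rcases eq_or_ne i i₀ with h | h
        · subst h; simp
        · rw [if_neg (Ne.symm h), if_neg h, mul_zero]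
      rw [Finset.sum_congr rfl h1, Finset.sum_ite_eq' (Finset.range (d + 1 - j₀))]
      rw [if_pos (Finset.mem_range.mpr (by omega))]
    have hν₀ : ν i₀ j₀ = μ x := by
      have he : ((i₀, j₀) : ℕ × ℕ) = x.1 := rfl
      rw [hνdef]
      simp only [he]
      rw [dif_pos x.2]
    have hPne : P j₀ ≠ 0 := fun h => hx (by rw [← hν₀, ← hcoeff, h]; simp)
    set s := (Finset.range (d + 1)).filter (fun j => P j ≠ 0) with hsdef
    have hsne : s.Nonempty := ⟨j₀, Finset.mem_filter.mpr ⟨Finset.mem_range.mpr hj, hPne⟩⟩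
    have hdegle : ∀ j, j ≤ d → (P j).natDegree ≤ d - j := by
      intro j hjd
      rw [hPdef]
      apply Polynomial.natDegree_sum_le_of_forall_le
      intro i hi
      refine le_trans (Polynomial.natDegree_C_mul_le _ _) ?_
      refine le_trans (Polynomial.natDegree_X_pow_le _) ?_
      have := Finset.mem_range.mp hi
      omega
    have hbound : ∑ j ∈ s, ((P j).natDegree + 1) ≤ B + 1 := by
      rw [← hB, ← sumdeg d]
      calc ∑ j ∈ s, ((P j).natDegree + 1) ≤ ∑ j ∈ s, (d + 1 - j) := by
            refine Finset.sum_le_sum fun j hj => ?_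
            have hjd : j ≤ d := by
              have := Finset.mem_range.mp (Finset.mem_of_mem_filter j hj)
              omega
            have := hdegle j hjd
            omega
        _ ≤ ∑ j ∈ Finset.range (d + 1), (d + 1 - j) :=
            Finset.sum_le_sum_of_subset (Finset.filter_subset _ _)
    have hres : ∑ j ∈ s, ((P j : PowerSeries ℚ)) * Ee j
        = ∑ j ∈ Finset.range (d + 1), ((P j : PowerSeries ℚ)) * Ee j := by
      apply Finset.sum_filter_of_ne
      intro j _ hne h0
      exact hne (by rw [h0, Polynomial.coe_zero, zero_mul])
    exact key_s11 (B + 1) s P hsne (fun j hj => (Finset.mem_filter.mp hj).2) hbound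
      (fun k hk => by rw [hres]; exact hvan k hk)
  intro a b hab
  have := h0 (a - b) (by rw [map_sub, hab, sub_self])
  exact sub_eq_zero.mp this

theorem stmt_11 (d : ℕ) (hd : 0 < d) (B : ℕ) (hB : B = Nat.choose (d + 2) 2 - 1)
    -- e^{jt} as a power series over ℚ
    (E : ℕ → PowerSeries ℚ)
    (hE : ∀ j, E j = PowerSeries.mk fun n => (j : ℚ) ^ n / n.factorial) :
    ∃ μ : ℕ → ℕ → ℚ,
      (PowerSeries.coeff B
          (∑ p ∈ (Finset.range (d + 1) ×ˢ Finset.range (d + 1)).filter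
              (fun p => p.1 + p.2 ≤ d),
            PowerSeries.C (μ p.1 p.2) * PowerSeries.X ^ p.1 * E p.2) = 1) ∧
      ∀ l < B, PowerSeries.coeff l
          (∑ p ∈ (Finset.range (d + 1) ×ˢ Finset.range (d + 1)).filter
              (fun p => p.1 + p.2 ≤ d),
            PowerSeries.C (μ p.1 p.2) * PowerSeries.X ^ p.1 * E p.2) = 0 := by
  have hEe : E = Ee := funext fun j => (hE j).trans rfl
  have hchoosepos : 0 < Nat.choose (d + 2) 2 := Nat.choose_pos (by omega)
  have hchoose : Nat.choose (d + 2) 2 = B + 1 := by omega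
  have hcard : Fintype.card ↥((Finset.range (d + 1) ×ˢ Finset.range (d + 1)).filter
      (fun p => p.1 + p.2 ≤ d)) = B + 1 := by
    rw [Fintype.card_coe]
    rw [Finset.card_eq_sum_ones]
    rw [rearrange d (fun _ _ => (1 : ℕ))]
    have : ∀ j ∈ Finset.range (d + 1), ∑ _i ∈ Finset.range (d + 1 - j), (1 : ℕ) = d + 1 - j := by
      intro j _
      simp
    rw [Finset.sum_congr rfl this, sumdeg d, hchoose]
  have hrank : Module.finrank ℚ (↥((Finset.range (d + 1) ×ˢ Finset.range (d + 1)).filter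
      (fun p => p.1 + p.2 ≤ d)) → ℚ) = Module.finrank ℚ (Fin (B + 1) → ℚ) := by
    rw [Module.finrank_fintype_fun_eq_card, Module.finrank_fintype_fun_eq_card,
      Fintype.card_fin, hcard]
  have hsurj : Function.Surjective (Lmap d B) :=
    (LinearMap.injective_iff_surjective_of_finrank_eq_finrank hrank).mp
      (Linj d B hchoose)
  obtain ⟨μ', hμ'⟩ := hsurj (Pi.single (⟨B, Nat.lt_succ_self B⟩ : Fin (B + 1)) 1)
  refine ⟨fun i j => if h : ((i, j) : ℕ × ℕ) ∈ (Finset.range (d + 1) ×ˢ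
      Finset.range (d + 1)).filter (fun p => p.1 + p.2 ≤ d) then μ' ⟨(i, j), h⟩ else 0, ?_, ?_⟩
  · rw [hEe]
    simp only [Prod.mk.eta]
    rw [← attach_sum d μ' Ee]
    exact (congrFun hμ' ⟨B, Nat.lt_succ_self B⟩).trans (by simp)
  · intro l hl
    rw [hEe]
    simp only [Prod.mk.eta]
    rw [← attach_sum d μ' Ee]
    refine (congrFun hμ' ⟨l, by omega⟩).trans ?_
    rw [Pi.single_eq_of_ne (by simp [Fin.ext_iff]; omega)]
end

section
/- Let P ∈ ℂ[x,y] be a polynomial such that P(x, 0) is not the zero polynomial. Then the system of differential equations x' = 1, y' = y, P(x, y) = 0 has no solution in ℂ[[t]]: there are no power series x(t), y(t) ∈ ℂ[[t]] with x'(t) = 1, y'(t) = y(t), and P(x(t), y(t)) = 0. -/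
open PowerSeries

lemma my_derivative_exp : derivative ℂ (exp ℂ) = exp ℂ := by
  ext n
  rw [PowerSeries.coeff_derivative, coeff_exp, coeff_exp]
  have h1 : (Nat.factorial (n+1) : ℚ) = (Nat.factorial n : ℚ) * (n+1) := by
    push_cast [Nat.factorial_succ]; ring
  have h2' : ((n : ℂ) + 1) ≠ 0 := Nat.cast_add_one_ne_zero n
  have h3' : ((Nat.factorial n : ℂ)) ≠ 0 := by
    exact_mod_cast Nat.cast_ne_zero.mpr (Nat.factorial_ne_zero n)
  rw [h1]
  push_cast
  field_simp

lemma my_derivative_exp_pow (j : ℕ) :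
    derivative ℂ (exp ℂ ^ j) = j • (exp ℂ ^ j) := by
  cases j with
  | zero => simp
  | succ k =>
      rw [Derivation.leibniz_pow, my_derivative_exp, smul_eq_mul, ← pow_succ]
      simp

lemma my_deriv_term (q : Polynomial ℂ) (j : ℕ) :
    derivative ℂ ((q : ℂ⟦X⟧) * exp ℂ ^ j)
      = ((Polynomial.derivative q : Polynomial ℂ) : ℂ⟦X⟧) * exp ℂ ^ j
        + (j : ℂ⟦X⟧) * ((q : ℂ⟦X⟧) * exp ℂ ^ j) := by
  rw [Derivation.leibniz, my_derivative_exp_pow, PowerSeries.derivative_coe]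
  rw [smul_eq_mul, smul_eq_mul, nsmul_eq_mul]
  ring

lemma my_poly_ode {q : Polynomial ℂ} {c : ℂ} (hc : c ≠ 0)
    (h : Polynomial.derivative q + c • q = 0) : q = 0 := by
  by_contra hq
  by_cases hd : Polynomial.derivative q = 0
  · rw [hd, zero_add, smul_eq_zero] at h
    tauto
  · have hnd : q.natDegree ≠ 0 := by
      intro h0
      obtain ⟨a, rfl⟩ := Polynomial.natDegree_eq_zero.mp h0
      simp at hd
    have hlt := Polynomial.natDegree_derivative_lt hnd
    have heq : Polynomial.derivative q = -(c • q) := by linear_combination h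
    rw [heq, Polynomial.natDegree_neg, Polynomial.smul_eq_C_mul,
      Polynomial.natDegree_C_mul hc] at hlt
    exact lt_irrefl _ hlt

lemma my_step (c : ℂ) (n : ℕ) (q : ℕ → Polynomial ℂ)
    (h : ∑ j ∈ Finset.range n, ((q j : ℂ⟦X⟧) * exp ℂ ^ j) = 0) :
    ∑ j ∈ Finset.range n,
      (((Polynomial.derivative (q j) + ((j : ℂ) - c) • q j : Polynomial ℂ) : ℂ⟦X⟧) * exp ℂ ^ j) = 0 := by
  have h1 : derivative ℂ (∑ j ∈ Finset.range n, ((q j : ℂ⟦X⟧) * exp ℂ ^ j))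
      - (PowerSeries.C c) * (∑ j ∈ Finset.range n, ((q j : ℂ⟦X⟧) * exp ℂ ^ j)) = 0 := by
    rw [h]; simp
  rw [map_sum, Finset.mul_sum, ← Finset.sum_sub_distrib] at h1
  rw [← h1]
  apply Finset.sum_congr rfl
  intro j _
  rw [my_deriv_term]
  push_cast [Polynomial.smul_eq_C_mul]
  rw [map_sub, map_natCast]
  ring

lemma my_exp_ne_zero : (exp ℂ : ℂ⟦X⟧) ≠ 0 := by
  intro h
  have h1 := constantCoeff_exp (A := ℂ)
  rw [h] at h1
  simp at h1

lemma my_indep : ∀ (n : ℕ) (q : ℕ → Polynomial ℂ),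
    (∑ j ∈ Finset.range (n+1), ((q j : ℂ⟦X⟧) * exp ℂ ^ j)) = 0 → ∀ j ≤ n, q j = 0 := by
  intro n
  induction n with
  | zero =>
      intro q h j hj
      interval_cases j
      rw [Finset.sum_range_one, pow_zero, mul_one] at h
      exact_mod_cast Polynomial.coe_eq_zero_iff.mp h
  | succ n IH =>
      have caseA : ∀ q : ℕ → Polynomial ℂ,
          (∑ j ∈ Finset.range (n+1+1), ((q j : ℂ⟦X⟧) * exp ℂ ^ j)) = 0 →
          Polynomial.derivative (q (n+1)) = 0 → ∀ j ≤ n+1, q j = 0 := by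
        intro q hsum hder
        have hrel' : ∑ j ∈ Finset.range (n+1+1),
            (((Polynomial.derivative (q j) + ((j : ℂ) - ((n:ℂ)+1)) • q j : Polynomial ℂ) : ℂ⟦X⟧)
              * exp ℂ ^ j) = 0 := my_step _ _ q hsum
        rw [Finset.sum_range_succ] at hrel'
        have htop : (Polynomial.derivative (q (n+1)) + (((n+1 : ℕ) : ℂ) - ((n:ℂ)+1)) • q (n+1)
            : Polynomial ℂ) = 0 := by
          rw [hder]
          have : (((n+1 : ℕ) : ℂ) - ((n:ℂ)+1)) = 0 := by push_cast; ring
          rw [this, zero_smul, add_zero]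
        rw [htop] at hrel'
        simp only [Polynomial.coe_zero, zero_mul, add_zero] at hrel'
        have hlow : ∀ j ≤ n, q j = 0 := by
          intro j hj
          have h1 := IH _ hrel' j hj
          refine my_poly_ode (c := (j : ℂ) - ((n:ℂ)+1)) ?_ h1
          refine sub_ne_zero.mpr ?_
          have : (j : ℂ) ≠ ((n+1 : ℕ) : ℂ) := by
            exact_mod_cast Nat.ne_of_lt (by omega)
          simpa using this
        have htopz : q (n+1) = 0 := by
          rw [Finset.sum_range_succ] at hsum
          have hz : ∑ j ∈ Finset.range (n+1), ((q j : ℂ⟦X⟧) * exp ℂ ^ j) = 0 := by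
            apply Finset.sum_eq_zero
            intro j hj
            rw [hlow j (by simpa using Nat.lt_succ_iff.mp (Finset.mem_range.mp hj))]
            simp
          rw [hz, zero_add] at hsum
          rcases mul_eq_zero.mp hsum with h | h
          · exact_mod_cast Polynomial.coe_eq_zero_iff.mp h
          · exact absurd h (pow_ne_zero _ my_exp_ne_zero)
        intro j hj
        rcases Nat.lt_succ_iff_lt_or_eq.mp (Nat.lt_succ_of_le hj) with h | h
        · exact hlow j (Nat.lt_succ_iff.mp h)
        · rw [h]; exact htopz
      have inner : ∀ d (q : ℕ → Polynomial ℂ), (q (n+1)).natDegree ≤ d →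
          (∑ j ∈ Finset.range (n+1+1), ((q j : ℂ⟦X⟧) * exp ℂ ^ j)) = 0 →
          ∀ j ≤ n+1, q j = 0 := by
        intro d
        induction d with
        | zero =>
            intro q hdeg hsum
            apply caseA q hsum
            obtain ⟨a, ha⟩ := Polynomial.natDegree_eq_zero.mp (Nat.le_zero.mp hdeg)
            rw [← ha]
            simp
        | succ d IHd =>
            intro q hdeg hsum
            by_cases hder : Polynomial.derivative (q (n+1)) = 0
            · exact caseA q hsum hder
            · set q' : ℕ → Polynomial ℂ :=
                fun j => Polynomial.derivative (q j) + ((j : ℂ) - ((n:ℂ)+1)) • q j with hq'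
              have hrel' : ∑ j ∈ Finset.range (n+1+1), ((q' j : ℂ⟦X⟧) * exp ℂ ^ j) = 0 :=
                my_step _ _ q hsum
              have htopeq : q' (n+1) = Polynomial.derivative (q (n+1)) := by
                rw [hq']
                push_cast
                simp
              have hnd : (q (n+1)).natDegree ≠ 0 := by
                intro h0
                obtain ⟨a, ha⟩ := Polynomial.natDegree_eq_zero.mp h0
                rw [← ha] at hder
                simp at hder
              have hdeg' : (q' (n+1)).natDegree ≤ d := by
                rw [htopeq]
                have := Polynomial.natDegree_derivative_lt hnd
                omega
              have hall := IHd q' hdeg' hrel'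
              have := hall (n+1) le_rfl
              rw [htopeq] at this
              exact absurd this hder
      intro q h j hj
      exact inner (q (n+1)).natDegree q le_rfl h j hj

lemma my_x (x : ℂ⟦X⟧) (h : derivative ℂ x = 1) :
    x = ((Polynomial.X + Polynomial.C (constantCoeff x) : Polynomial ℂ) : ℂ⟦X⟧) := by
  apply PowerSeries.derivative.ext
  · rw [h, Polynomial.coe_add, Polynomial.coe_X, Polynomial.coe_C, map_add, derivative_X,
      derivative_C, add_zero]
  · simp [Polynomial.coe_add, Polynomial.coe_X, Polynomial.coe_C]

lemma my_y (y : ℂ⟦X⟧) (h : derivative ℂ y = y) :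
    y = PowerSeries.C (constantCoeff y) * exp ℂ := by
  have hc : ∀ n, coeff n y = constantCoeff y * ((n.factorial : ℂ))⁻¹ := by
    intro n
    induction n with
    | zero => simp
    | succ n ih =>
        have h1 : coeff n (derivative ℂ y) = coeff n y := by rw [h]
        rw [PowerSeries.coeff_derivative] at h1
        have hne : ((n:ℂ)+1) ≠ 0 := Nat.cast_add_one_ne_zero n
        have h2 : coeff (n+1) y = coeff n y / ((n:ℂ)+1) := by
          field_simp
          linear_combination h1
        rw [h2, ih, Nat.factorial_succ]
        have h3 : ((n.factorial : ℂ)) ≠ 0 := by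
          exact_mod_cast Nat.cast_ne_zero.mpr (Nat.factorial_ne_zero n)
        push_cast
        rw [mul_inv]
        ring
  ext n
  rw [coeff_C_mul, hc n, coeff_exp]
  rw [eq_ratCast (algebraMap ℚ ℂ)]
  push_cast
  rw [one_div]

noncomputable def myPsi : Polynomial ℂ →ₐ[ℂ] ℂ⟦X⟧ := Polynomial.coeToPowerSeries.algHom ℂ

lemma myPsi_apply (p : Polynomial ℂ) : myPsi p = (p : ℂ⟦X⟧) := by
  rw [myPsi, Polynomial.coeToPowerSeries.algHom_apply, Algebra.algebraMap_self, PowerSeries.map_id,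
    id_eq]

noncomputable def myPhi : Polynomial (Polynomial ℂ) →ₐ[ℂ] ℂ⟦X⟧ :=
  Polynomial.eval₂AlgHom myPsi (exp ℂ) (fun _ => Commute.all _ _)

theorem stmt_12 (P : MvPolynomial (Fin 2) ℂ)
    (hP : MvPolynomial.aeval ![Polynomial.X, (0 : Polynomial ℂ)] P ≠ 0) :
    ¬ ∃ x y : PowerSeries ℂ,
        PowerSeries.derivative ℂ x = 1 ∧
        PowerSeries.derivative ℂ y = y ∧
        MvPolynomial.aeval ![x, y] P = 0 := by
  rintro ⟨x, y, hx, hy, hPxy⟩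
  set a := constantCoeff x with ha
  set b := constantCoeff y with hb
  have hxe := my_x x hx
  have hye := my_y y hy
  set g : Fin 2 → Polynomial (Polynomial ℂ) :=
    ![Polynomial.C (Polynomial.X + Polynomial.C a), Polynomial.C (Polynomial.C b) * Polynomial.X]
    with hg
  have hgi : (fun i => myPhi (g i)) = ![x, y] := by
    funext i
    fin_cases i
    · show myPhi (Polynomial.C (Polynomial.X + Polynomial.C a)) = x
      rw [myPhi, Polynomial.eval₂AlgHom_apply, Polynomial.eval₂_C, RingHom.coe_coe,
        myPsi_apply, hxe]
    · show myPhi (Polynomial.C (Polynomial.C b) * Polynomial.X) = y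
      rw [myPhi, Polynomial.eval₂AlgHom_apply, Polynomial.eval₂_mul, Polynomial.eval₂_C,
        Polynomial.eval₂_X, RingHom.coe_coe, myPsi_apply, Polynomial.coe_C, hye]
  set R0 := MvPolynomial.aeval g P with hR0
  have hphiR0 : myPhi R0 = 0 := by
    rw [hR0, MvPolynomial.comp_aeval_apply, hgi, hPxy]
  have hsum : ∑ j ∈ Finset.range (R0.natDegree + 1), ((R0.coeff j : ℂ⟦X⟧) * exp ℂ ^ j) = 0 := by
    rw [← hphiR0, myPhi, Polynomial.eval₂AlgHom_apply, Polynomial.eval₂_eq_sum_range]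
    apply Finset.sum_congr rfl
    intro j _
    rw [RingHom.coe_coe, myPsi_apply]
  have hcoeffs := my_indep R0.natDegree R0.coeff hsum
  have hR0z : R0 = 0 := by
    apply Polynomial.ext
    intro j
    rw [Polynomial.coeff_zero]
    by_cases hj : j ≤ R0.natDegree
    · exact hcoeffs j hj
    · exact Polynomial.coeff_eq_zero_of_natDegree_lt (by omega)
  -- evaluate Y ↦ 0
  set χ : Polynomial (Polynomial ℂ) →ₐ[ℂ] Polynomial ℂ :=
    (Polynomial.aeval (0 : Polynomial ℂ)).restrictScalars ℂ with hχ
  have h1 : MvPolynomial.aeval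
      ![Polynomial.X + Polynomial.C a, (0 : Polynomial ℂ)] P = 0 := by
    have h2 : χ R0 = 0 := by rw [hR0z, map_zero]
    rw [hR0, MvPolynomial.comp_aeval_apply] at h2
    have hvec : (fun i => χ (g i)) = ![Polynomial.X + Polynomial.C a, (0 : Polynomial ℂ)] := by
      funext i
      fin_cases i
      · show χ (Polynomial.C (Polynomial.X + Polynomial.C a)) = Polynomial.X + Polynomial.C a
        rw [hχ, AlgHom.restrictScalars_apply, Polynomial.aeval_C]
        rfl
      · show χ (Polynomial.C (Polynomial.C b) * Polynomial.X) = (0 : Polynomial ℂ)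
        rw [hχ, AlgHom.restrictScalars_apply, map_mul, Polynomial.aeval_X, mul_zero]
    rwa [hvec] at h2
  -- translate X ↦ X - a
  set τ : Polynomial ℂ →ₐ[ℂ] Polynomial ℂ :=
    Polynomial.aeval (Polynomial.X - Polynomial.C a) with hτ
  apply hP
  have h3 : τ (MvPolynomial.aeval
      ![Polynomial.X + Polynomial.C a, (0 : Polynomial ℂ)] P) = 0 := by
    rw [h1, map_zero]
  rw [MvPolynomial.comp_aeval_apply] at h3
  have hvec2 : (fun i => τ (![Polynomial.X + Polynomial.C a, (0 : Polynomial ℂ)] i))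
      = ![Polynomial.X, (0 : Polynomial ℂ)] := by
    funext i
    fin_cases i
    · show τ (Polynomial.X + Polynomial.C a) = Polynomial.X
      rw [hτ, map_add, Polynomial.aeval_X, Polynomial.aeval_C]
      show Polynomial.X - Polynomial.C a + Polynomial.C a = Polynomial.X
      ring
    · show τ 0 = (0 : Polynomial ℂ)
      rw [map_zero]
  rwa [hvec2] at h3
end

section
/- For integers d ≥ 2, n ≥ 1, and 0 ≤ m ≤ n − 1, we have d^n · Σ_{i=0}^m Σ_{j=0}^i d^{(n−i)(2^{j+1}−2)} ≤ d^{(n−m+1)·2^{m+1}}. -/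
private lemma aux1 (m : ℕ) : 2*m+2 ≤ 2^(m+1) := by
  induction m with
  | zero => norm_num
  | succ k ih => rw [pow_succ]; omega

private lemma aux2 (m : ℕ) : (m+1)^2 ≤ 2^(m+2) := by
  induction m with
  | zero => norm_num
  | succ k ih =>
    have h1 := aux1 (k+1)
    have : 2^(k+3) = 2 * 2^(k+2) := by ring
    nlinarith

private lemma step17 (n m : ℕ) (h : m+2 ≤ n) :
    (n-m)*(2^(m+1)-2) ≤ (n-(m+1))*(2^(m+2)-2) := by
  obtain ⟨k, hk⟩ : ∃ k, n - (m+1) = k + 1 := ⟨n - m - 2, by omega⟩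
  have hnm : n - m = k + 2 := by omega
  obtain ⟨Q, hQ⟩ : ∃ Q, 2^(m+1) = Q + 2 := ⟨2^(m+1) - 2, by have := aux1 m; omega⟩
  have hQ2 : 2^(m+2) = 2*Q + 4 := by rw [pow_succ, hQ]; ring
  rw [hk, hnm, hQ, hQ2]
  have e1 : Q+2-2 = Q := by omega
  have e2 : 2*Q+4-2 = 2*Q+2 := by omega
  rw [e1, e2]
  have : Q ≤ (k+1)*Q := Nat.le_mul_of_pos_left Q (by omega)
  nlinarith

private lemma mono17 (n : ℕ) : ∀ m i, i ≤ m → m+1 ≤ n →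
    (n-i)*(2^(i+1)-2) ≤ (n-m)*(2^(m+1)-2) := by
  intro m
  induction m with
  | zero => intro i hi _; interval_cases i; exact le_rfl
  | succ k ih =>
    intro i hi hn
    rcases Nat.lt_or_ge i (k+1) with h | h
    · exact le_trans (ih i (by omega) (by omega)) (step17 n k (by omega))
    · have : i = k + 1 := by omega
      subst this; exact le_rfl

theorem stmt_17 (d n m : ℕ) (hd : 2 ≤ d) (hn : 1 ≤ n) (hm : m ≤ n - 1) :
    d ^ n * ∑ i ∈ Finset.range (m + 1), ∑ j ∈ Finset.range (i + 1),
      d ^ ((n - i) * (2 ^ (j + 1) - 2)) ≤ d ^ ((n - m + 1) * 2 ^ (m + 1)) := by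
  have hd1 : 1 ≤ d := by omega
  have hmn : m + 1 ≤ n := by omega
  set F := (n - m) * (2^(m+1) - 2) with hF
  have hterm : ∀ i ∈ Finset.range (m+1), ∀ j ∈ Finset.range (i+1),
      d ^ ((n - i) * (2 ^ (j + 1) - 2)) ≤ d ^ F := by
    intro i hi j hj
    simp only [Finset.mem_range] at hi hj
    apply Nat.pow_le_pow_right hd1
    calc (n - i) * (2 ^ (j + 1) - 2)
        ≤ (n - i) * (2 ^ (i + 1) - 2) := by
          apply Nat.mul_le_mul_left
          exact Nat.sub_le_sub_right (Nat.pow_le_pow_right (by norm_num) (by omega)) 2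
      _ ≤ F := mono17 n m i (by omega) hmn
  have hsum : (∑ i ∈ Finset.range (m + 1), ∑ j ∈ Finset.range (i + 1),
      d ^ ((n - i) * (2 ^ (j + 1) - 2))) ≤ (m+1)^2 * d ^ F := by
    calc (∑ i ∈ Finset.range (m + 1), ∑ j ∈ Finset.range (i + 1),
        d ^ ((n - i) * (2 ^ (j + 1) - 2)))
        ≤ ∑ i ∈ Finset.range (m + 1), ∑ j ∈ Finset.range (i + 1), d ^ F := by
          apply Finset.sum_le_sum
          intro i hi
          exact Finset.sum_le_sum (hterm i hi)
      _ ≤ ∑ i ∈ Finset.range (m + 1), (m+1) * d ^ F := by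
          apply Finset.sum_le_sum
          intro i hi
          simp only [Finset.sum_const, Finset.card_range, smul_eq_mul]
          simp only [Finset.mem_range] at hi
          exact Nat.mul_le_mul_right _ (by omega)
      _ = (m+1)^2 * d ^ F := by
          simp [Finset.sum_const, Finset.card_range]; ring
  calc d ^ n * ∑ i ∈ Finset.range (m + 1), ∑ j ∈ Finset.range (i + 1),
        d ^ ((n - i) * (2 ^ (j + 1) - 2))
      ≤ d ^ n * ((m+1)^2 * d ^ F) := Nat.mul_le_mul_left _ hsum
    _ ≤ d ^ n * (d^(m+2) * d ^ F) := by
        have h1 : (m+1)^2 ≤ d^(m+2) :=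
          le_trans (aux2 m) (Nat.pow_le_pow_left hd _)
        exact Nat.mul_le_mul_left _ (Nat.mul_le_mul_right _ h1)
    _ = d ^ (n + (m+2) + F) := by rw [pow_add, pow_add]; ring
    _ ≤ d ^ ((n - m + 1) * 2 ^ (m + 1)) := by
        apply Nat.pow_le_pow_right hd1
        obtain ⟨k, hk⟩ : ∃ k, n - m = k + 1 := ⟨n - m - 1, by omega⟩
        have hn' : n = k + 1 + m := by omega
        obtain ⟨Q, hQ⟩ : ∃ Q, 2^(m+1) = Q + 2*m + 2 := ⟨2^(m+1) - (2*m+2), by have := aux1 m; omega⟩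
        have hF2 : 2^(m+1) - 2 = Q + 2*m := by omega
        rw [hF, hk, hn', hQ]
        have e : Q+2*m+2-2 = Q+2*m := by omega
        rw [e]
        nlinarith
end
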